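/- arXiv:1602.05761 — 5 statements merged into one kernel-verified Lean document; each statement's English description precedes it below -/
import Mathlib

section
/- Assume g : ℝ^d → ℝ^{d×p} is continuous, U ⊂ C([0,T],ℝ^{d−r}) is compact under ‖·‖∞, U_n ⊆ U are nonempty compact subsets, m is continuous on [0,T], and ‖m̂_n − m‖∞ → 0 in probability. Then: sup_{u∈U_n} ‖Â_u − A_u‖ = o_P(1), sup_{u∈U_n} ‖A_u‖ = O(1), sup_{u∈U_n} ‖Â_u‖ = O_P(1); and sup_{u∈U_n} ‖B̂_u − B_u‖ = o_P(1), sup_{u∈U_n} ‖B_u‖ = O(1), sup_{u∈U_n} ‖B̂_u‖ = O_P(1). -/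
open MeasureTheory Filter
open scoped Matrix

attribute [local instance] Matrix.frobeniusSeminormedAddCommGroup
  Matrix.frobeniusNormedAddCommGroup Matrix.frobeniusNormedSpace

noncomputable section

namespace ODEC

/-- sup over `[0,T]` of the norm of `f`. -/
def supN {E : Type*} [SeminormedAddCommGroup E] (T : ℝ) (f : ℝ → E) : ℝ :=
  ⨆ t : Set.Icc (0:ℝ) T, ‖f t‖

/-- extension of a continuous function on `[0,T]` to `ℝ`. -/
def ext {T : ℝ} (hT : 0 ≤ T) {E : Type*} [TopologicalSpace E]
    (f : C(Set.Icc (0:ℝ) T, E)) : ℝ → E :=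
  fun t => f (Set.projIcc 0 T hT t)

/-- combining measured and unmeasured components into one vector function -/
def pair {r q : ℕ} (m : ℝ → EuclideanSpace ℝ (Fin r)) (u : ℝ → EuclideanSpace ℝ (Fin q)) :
    ℝ → EuclideanSpace ℝ (Fin (r + q)) :=
  fun t => (EuclideanSpace.equiv (Fin (r + q)) ℝ).symm
    (Fin.append (EuclideanSpace.equiv (Fin r) ℝ (m t)) (EuclideanSpace.equiv (Fin q) ℝ (u t)))

def measPart {r q : ℕ} (x : ℝ → EuclideanSpace ℝ (Fin (r + q))) : ℝ → EuclideanSpace ℝ (Fin r) :=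
  fun t => (EuclideanSpace.equiv (Fin r) ℝ).symm fun i => x t (Fin.castAdd q i)

def unmeasPart {r q : ℕ} (x : ℝ → EuclideanSpace ℝ (Fin (r + q))) : ℝ → EuclideanSpace ℝ (Fin q) :=
  fun t => (EuclideanSpace.equiv (Fin q) ℝ).symm fun i => x t (Fin.natAdd r i)

/-- matrix-vector multiplication between Euclidean spaces -/
def mv {a b : ℕ} (A : Matrix (Fin a) (Fin b) ℝ) (v : EuclideanSpace ℝ (Fin b)) :
    EuclideanSpace ℝ (Fin a) :=
  Matrix.toEuclideanLin A v

variable {n p : ℕ}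

def Gm (g : EuclideanSpace ℝ (Fin n) → Matrix (Fin n) (Fin p) ℝ)
    (x : ℝ → EuclideanSpace ℝ (Fin n)) (t : ℝ) : Matrix (Fin n) (Fin p) ℝ :=
  ∫ s in (0:ℝ)..t, g (x s)

def Am (g : EuclideanSpace ℝ (Fin n) → Matrix (Fin n) (Fin p) ℝ)
    (x : ℝ → EuclideanSpace ℝ (Fin n)) (T : ℝ) : Matrix (Fin n) (Fin p) ℝ :=
  ∫ t in (0:ℝ)..T, Gm g x t

def Bm (g : EuclideanSpace ℝ (Fin n) → Matrix (Fin n) (Fin p) ℝ)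
    (x : ℝ → EuclideanSpace ℝ (Fin n)) (T : ℝ) : Matrix (Fin p) (Fin p) ℝ :=
  ∫ t in (0:ℝ)..T, (Gm g x t)ᵀ * Gm g x t

/-- the matrix `T·I_d − A B⁻¹ Aᵀ`. -/
def Cm (g : EuclideanSpace ℝ (Fin n) → Matrix (Fin n) (Fin p) ℝ)
    (x : ℝ → EuclideanSpace ℝ (Fin n)) (T : ℝ) : Matrix (Fin n) (Fin n) ℝ :=
  T • (1 : Matrix (Fin n) (Fin n) ℝ) - Am g x T * (Bm g x T)⁻¹ * (Am g x T)ᵀ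

def xiv (g : EuclideanSpace ℝ (Fin n) → Matrix (Fin n) (Fin p) ℝ)
    (x : ℝ → EuclideanSpace ℝ (Fin n)) (T : ℝ) : EuclideanSpace ℝ (Fin n) :=
  mv (Cm g x T)⁻¹
    (∫ t in (0:ℝ)..T, mv (1 - Am g x T * (Bm g x T)⁻¹ * (Gm g x t)ᵀ) (x t))

def thv (g : EuclideanSpace ℝ (Fin n) → Matrix (Fin n) (Fin p) ℝ)
    (x : ℝ → EuclideanSpace ℝ (Fin n)) (T : ℝ) : EuclideanSpace ℝ (Fin p) :=
  mv (Bm g x T)⁻¹ (∫ t in (0:ℝ)..T, mv (Gm g x t)ᵀ (x t - xiv g x T))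

def Mf (g : EuclideanSpace ℝ (Fin n) → Matrix (Fin n) (Fin p) ℝ)
    (x : ℝ → EuclideanSpace ℝ (Fin n)) (T : ℝ) : ℝ :=
  ∫ t in (0:ℝ)..T, ‖x t - xiv g x T - mv (Gm g x t) (thv g x T)‖ ^ 2

/-- `x` solves the integral equation `x(t) = ξ + (∫₀ᵗ g(x(s)) ds)·θ` on `[0,T]`. -/
def IsSol (g : EuclideanSpace ℝ (Fin n) → Matrix (Fin n) (Fin p) ℝ) (T : ℝ)
    (θ : EuclideanSpace ℝ (Fin p)) (ξ : EuclideanSpace ℝ (Fin n))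
    (x : ℝ → EuclideanSpace ℝ (Fin n)) : Prop :=
  ContinuousOn x (Set.Icc 0 T) ∧ ∀ t ∈ Set.Icc (0:ℝ) T, x t = ξ + mv (Gm g x t) θ

end ODEC

open ODEC

namespace ODECAux

/-- appending two euclidean vectors -/
def pairP {r q : ℕ} (a : EuclideanSpace ℝ (Fin r)) (b : EuclideanSpace ℝ (Fin q)) :
    EuclideanSpace ℝ (Fin (r+q)) :=
  (EuclideanSpace.equiv _ ℝ).symm
    (Fin.append ((EuclideanSpace.equiv _ ℝ) a) ((EuclideanSpace.equiv _ ℝ) b))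

lemma pair_eq {r q : ℕ} (m : ℝ → EuclideanSpace ℝ (Fin r)) (u : ℝ → EuclideanSpace ℝ (Fin q))
    (t : ℝ) : pair m u t = pairP (m t) (u t) := rfl

lemma norm_pairP_sub {r q : ℕ} (a a' : EuclideanSpace ℝ (Fin r)) (b : EuclideanSpace ℝ (Fin q)) :
    ‖pairP a b - pairP a' b‖ = ‖a - a'‖ := by
  rw [EuclideanSpace.norm_eq, EuclideanSpace.norm_eq]
  congr 1
  rw [Fin.sum_univ_add]
  simp [pairP, Fin.append_left, Fin.append_right]

lemma continuous_pairP {r q : ℕ} :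
    Continuous (fun z : EuclideanSpace ℝ (Fin r) × EuclideanSpace ℝ (Fin q) =>
      pairP z.1 z.2) := by
  refine Continuous.comp (PiLp.continuous_toLp 2 _) ?_
  refine continuous_pi fun i => ?_
  refine Fin.addCases (fun i => ?_) (fun i => ?_) i
  · simp only [Fin.append_left]
    exact (continuous_apply i).comp ((PiLp.continuous_ofLp 2 _).comp continuous_fst)
  · simp only [Fin.append_right]
    exact (continuous_apply i).comp ((PiLp.continuous_ofLp 2 _).comp continuous_snd)

lemma continuous_transpose_mul {a b c : ℕ} :
    Continuous (fun z : (Matrix (Fin a) (Fin b) ℝ) × (Matrix (Fin a) (Fin c) ℝ) =>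
      z.1ᵀ * z.2) := by
  have : IsBoundedBilinearMap ℝ
      (fun z : (Matrix (Fin a) (Fin b) ℝ) × (Matrix (Fin a) (Fin c) ℝ) => z.1ᵀ * z.2) := by
    refine ⟨fun x x' y => ?_, fun c x y => ?_, fun x y y' => ?_, fun c x y => ?_,
      1, one_pos, fun x y => ?_⟩
    · rw [Matrix.transpose_add, Matrix.add_mul]
    · rw [Matrix.transpose_smul, Matrix.smul_mul]
    · rw [Matrix.mul_add]
    · rw [Matrix.mul_smul]
    · rw [one_mul, ← Matrix.frobenius_norm_transpose x]
      exact Matrix.frobenius_norm_mul _ _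
  exact this.continuous

lemma norm_intervalIntegral_le {E : Type*} [NormedAddCommGroup E] [NormedSpace ℝ E]
    {T t K : ℝ} (ht : t ∈ Set.Icc 0 T) (hK : 0 ≤ K) {f : ℝ → E}
    (hb : ∀ s ∈ Set.Icc (0:ℝ) T, ‖f s‖ ≤ K) : ‖∫ s in (0:ℝ)..t, f s‖ ≤ K * T := by
  have h := intervalIntegral.norm_integral_le_of_norm_le_const (C := K) (f := f) (a := 0) (b := t)
    (fun s hs => by
      rw [Set.uIoc_of_le ht.1] at hs
      exact hb s ⟨hs.1.le, hs.2.trans ht.2⟩)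
  calc ‖∫ s in (0:ℝ)..t, f s‖ ≤ K * |t - 0| := h
    _ ≤ K * T := by
        rw [sub_zero, abs_of_nonneg ht.1]
        exact mul_le_mul_of_nonneg_left ht.2 hK

lemma continuousOn_primitive' {a b : ℕ} {T : ℝ} (hT : 0 ≤ T) {f : ℝ → Matrix (Fin a) (Fin b) ℝ}
    (hf : ContinuousOn f (Set.Icc 0 T)) :
    ContinuousOn (fun t => ∫ s in (0:ℝ)..t, f s) (Set.Icc 0 T) := by
  have := intervalIntegral.continuousOn_primitive_interval (a := 0) (b := T)
    (μ := MeasureTheory.volume) (f := f) ?_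
  · rwa [Set.uIcc_of_le hT] at this
  · rw [Set.uIcc_of_le hT]; exact hf.integrableOn_Icc

lemma intervalIntegrable' {a b : ℕ} {T t : ℝ} (ht : t ∈ Set.Icc 0 T)
    {f : ℝ → Matrix (Fin a) (Fin b) ℝ} (hf : ContinuousOn f (Set.Icc 0 T)) :
    @IntervalIntegrable _ _ (@NormedAddCommGroup.toENormedAddCommMonoid _
      Matrix.frobeniusNormedAddCommGroup).toENormedAddMonoid f MeasureTheory.volume 0 t := by
  apply ContinuousOn.intervalIntegrable
  rw [Set.uIcc_of_le ht.1]
  exact hf.mono (Set.Icc_subset_Icc_right ht.2)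

lemma norm_transpose_mul_sub_le {a b : ℕ} {G' G : Matrix (Fin a) (Fin b) ℝ} {KG KD : ℝ}
    (hG' : ‖G'‖ ≤ KG) (hG : ‖G‖ ≤ KG) (hd : ‖G' - G‖ ≤ KD)
    (hKG : 0 ≤ KG) (hKD : 0 ≤ KD) :
    ‖G'ᵀ * G' - Gᵀ * G‖ ≤ 2 * KG * KD := by
  have hid : G'ᵀ * G' - Gᵀ * G = G'ᵀ * (G' - G) + (G' - G)ᵀ * G := by
    simp [Matrix.mul_sub, Matrix.sub_mul, Matrix.transpose_sub]
  rw [hid]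
  calc ‖G'ᵀ * (G' - G) + (G' - G)ᵀ * G‖
      ≤ ‖G'ᵀ * (G' - G)‖ + ‖(G' - G)ᵀ * G‖ := norm_add_le _ _
    _ ≤ ‖G'ᵀ‖ * ‖G' - G‖ + ‖(G' - G)ᵀ‖ * ‖G‖ :=
        add_le_add (Matrix.frobenius_norm_mul _ _) (Matrix.frobenius_norm_mul _ _)
    _ ≤ KG * KD + KD * KG := by
        rw [Matrix.frobenius_norm_transpose, Matrix.frobenius_norm_transpose]
        exact add_le_add (mul_le_mul hG' hd (norm_nonneg _) hKG)
          (mul_le_mul hd hG (norm_nonneg _) hKD)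
    _ = 2 * KG * KD := by ring

set_option maxHeartbeats 1000000 in
/-- The key deterministic lemma: uniform bounds and uniform continuity in `m` of `Am`, `Bm`. -/
lemma key {r q p : ℕ} {T : ℝ} (hT : 0 < T)
    (g : EuclideanSpace ℝ (Fin (r + q)) → Matrix (Fin (r + q)) (Fin p) ℝ) (hg : Continuous g)
    (U : Set C(Set.Icc (0:ℝ) T, EuclideanSpace ℝ (Fin q))) (hU : IsCompact U)
    (m : ℝ → EuclideanSpace ℝ (Fin r)) (hm : ContinuousOn m (Set.Icc 0 T)) :
    ∃ CA CB : ℝ,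
      (∀ u ∈ U, ‖Am g (pair m (ext hT.le u)) T‖ ≤ CA ∧
        ‖Bm g (pair m (ext hT.le u)) T‖ ≤ CB) ∧
      ∀ ε > (0:ℝ), ∃ δ > (0:ℝ), ∀ (mh : C(Set.Icc (0:ℝ) T, EuclideanSpace ℝ (Fin r))),
        (∀ t : Set.Icc (0:ℝ) T, ‖mh t - m ↑t‖ < δ) → ∀ u ∈ U,
        ‖Am g (pair (ext hT.le mh) (ext hT.le u)) T - Am g (pair m (ext hT.le u)) T‖ < ε ∧
        ‖Bm g (pair (ext hT.le mh) (ext hT.le u)) T - Bm g (pair m (ext hT.le u)) T‖ < ε := by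
  have hmr : Continuous fun t : Set.Icc (0:ℝ) T => m ↑t := hm.restrict
  -- the compact set of all trajectory values
  set φ : Set.Icc (0:ℝ) T × C(Set.Icc (0:ℝ) T, EuclideanSpace ℝ (Fin q)) →
      EuclideanSpace ℝ (Fin (r + q)) := fun z => pairP (m ↑z.1) (z.2 z.1) with hφdef
  have hφ : Continuous φ := by
    rw [hφdef]
    exact continuous_pairP.comp ((hmr.comp continuous_fst).prodMk
      (ContinuousEval.continuous_eval.comp (continuous_snd.prodMk continuous_fst)))
  set K1 : Set (EuclideanSpace ℝ (Fin (r + q))) := φ '' (Set.univ ×ˢ U) with hK1def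
  have hK1 : IsCompact K1 := (isCompact_univ.prod hU).image hφ
  set K2 := Metric.cthickening 1 K1 with hK2def
  have hK2 : IsCompact K2 := hK1.cthickening
  have hK12 : K1 ⊆ K2 := Metric.self_subset_cthickening _
  -- membership of true trajectories
  have hmem1 : ∀ u ∈ U, ∀ t ∈ Set.Icc (0:ℝ) T, pair m (ext hT.le u) t ∈ K1 := by
    intro u hu t ht
    have : pair m (ext hT.le u) t = φ (⟨t, ht⟩, u) := by
      rw [pair_eq, hφdef]
      simp only [ext, Set.projIcc_of_mem hT.le ht]
    rw [this]
    exact Set.mem_image_of_mem φ (by simp [hu])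
  -- bound on g over K2
  obtain ⟨Kg0, hKg0⟩ := hK2.exists_bound_of_continuousOn hg.continuousOn
  set Kg := max Kg0 0 with hKgdef
  have hKg : 0 ≤ Kg := le_max_right _ _
  have hgK2 : ∀ y ∈ K2, ‖g y‖ ≤ Kg := fun y hy => (hKg0 y hy).trans (le_max_left _ _)
  -- uniform continuity of g on K2
  have hUC := hK2.uniformContinuousOn_of_continuous hg.continuousOn
  replace hUC := Metric.uniformContinuousOn_iff.mp hUC
  -- basic facts about the true trajectories
  have hxc : ∀ u : C(Set.Icc (0:ℝ) T, EuclideanSpace ℝ (Fin q)),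
      ContinuousOn (pair m (ext hT.le u)) (Set.Icc 0 T) := by
    intro u
    have : pair m (ext hT.le u) = fun t => pairP (m t) (ext hT.le u t) := rfl
    rw [this]
    exact continuous_pairP.comp_continuousOn
      (hm.prodMk ((u.continuous.comp continuous_projIcc).continuousOn))
  have hgb : ∀ u ∈ U, ∀ s ∈ Set.Icc (0:ℝ) T, ‖g (pair m (ext hT.le u) s)‖ ≤ Kg :=
    fun u hu s hs => hgK2 _ (hK12 (hmem1 u hu s hs))
  have hGb : ∀ u ∈ U, ∀ t ∈ Set.Icc (0:ℝ) T, ‖Gm g (pair m (ext hT.le u)) t‖ ≤ Kg * T :=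
    fun u hu t ht => norm_intervalIntegral_le ht hKg (hgb u hu)
  have hGc : ∀ u : C(Set.Icc (0:ℝ) T, EuclideanSpace ℝ (Fin q)),
      ContinuousOn (Gm g (pair m (ext hT.le u))) (Set.Icc 0 T) :=
    fun u => continuousOn_primitive' hT.le (hg.comp_continuousOn (hxc u))
  have hTmem : T ∈ Set.Icc (0:ℝ) T := ⟨hT.le, le_refl T⟩
  refine ⟨Kg * T * T, (Kg * T) * (Kg * T) * T, ?_, ?_⟩
  · intro u hu
    constructor
    · exact norm_intervalIntegral_le hTmem (mul_nonneg hKg hT.le) (hGb u hu)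
    · refine norm_intervalIntegral_le hTmem
        (mul_nonneg (mul_nonneg hKg hT.le) (mul_nonneg hKg hT.le)) ?_
      intro t ht
      calc ‖(Gm g (pair m (ext hT.le u)) t)ᵀ * Gm g (pair m (ext hT.le u)) t‖
          ≤ ‖(Gm g (pair m (ext hT.le u)) t)ᵀ‖ * ‖Gm g (pair m (ext hT.le u)) t‖ :=
            Matrix.frobenius_norm_mul _ _
        _ ≤ (Kg * T) * (Kg * T) := by
            rw [Matrix.frobenius_norm_transpose]
            exact mul_le_mul (hGb u hu t ht) (hGb u hu t ht) (norm_nonneg _)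
              (mul_nonneg hKg hT.le)
  · intro ε hε
    have hTT : (0:ℝ) ≤ T * T := mul_nonneg hT.le hT.le
    have hKg3 : (0:ℝ) ≤ Kg * T * T * T :=
      mul_nonneg (mul_nonneg (mul_nonneg hKg hT.le) hT.le) hT.le
    set c : ℝ := T * T + 2 * (Kg * T * T * T) + 1 with hcdef
    have hc : 0 < c := by rw [hcdef]; linarith
    obtain ⟨ε₀, hε₀, hsm1, hsm2⟩ :
        ∃ ε₀ > (0:ℝ), ε₀ * T * T < ε ∧ 2 * (Kg * T) * (ε₀ * T) * T < ε := by
      have he : 0 < ε / (2 * c) := div_pos hε (by linarith)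
      have h2c : ε / (2 * c) * (2 * c) = ε := div_mul_cancel₀ ε (by linarith)
      refine ⟨ε / (2 * c), he, ?_, ?_⟩
      · calc ε / (2 * c) * T * T = ε / (2 * c) * (T * T) := by ring
          _ < ε / (2 * c) * (2 * c) := by
              refine mul_lt_mul_of_pos_left ?_ he
              rw [hcdef]; linarith
          _ = ε := h2c
      · calc 2 * (Kg * T) * (ε / (2 * c) * T) * T
            = ε / (2 * c) * (2 * (Kg * T * T * T)) := by ring
          _ < ε / (2 * c) * (2 * c) := by
              refine mul_lt_mul_of_pos_left ?_ he
              rw [hcdef]; linarith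
          _ = ε := h2c
    obtain ⟨δg, hδg, hδgP⟩ := hUC ε₀ hε₀
    refine ⟨min δg 1, lt_min hδg one_pos, ?_⟩
    intro mh hmh u hu
    have hdist : ∀ s ∈ Set.Icc (0:ℝ) T,
        dist (pair (ext hT.le mh) (ext hT.le u) s) (pair m (ext hT.le u) s) < min δg 1 := by
      intro s hs
      rw [dist_eq_norm, pair_eq, pair_eq, norm_pairP_sub]
      have hx : ext hT.le mh s = mh ⟨s, hs⟩ := by
        simp only [ext, Set.projIcc_of_mem hT.le hs]
      rw [hx]
      exact hmh ⟨s, hs⟩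
    set x := pair m (ext hT.le u) with hxdef
    set x' := pair (ext hT.le mh) (ext hT.le u) with hx'def
    have hmem2 : ∀ s ∈ Set.Icc (0:ℝ) T, x' s ∈ K2 := by
      intro s hs
      exact Metric.mem_cthickening_of_dist_le (x' s) (x s) 1 K1 (hmem1 u hu s hs)
        ((hdist s hs).le.trans (min_le_right _ _))
    have hx'c : ContinuousOn x' (Set.Icc 0 T) := by
      have : x' = fun t => pairP (ext hT.le mh t) (ext hT.le u t) := rfl
      rw [this]
      exact (continuous_pairP.comp
        ((mh.continuous.comp continuous_projIcc).prodMk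
          (u.continuous.comp continuous_projIcc))).continuousOn
    have hg'b : ∀ s ∈ Set.Icc (0:ℝ) T, ‖g (x' s)‖ ≤ Kg := fun s hs => hgK2 _ (hmem2 s hs)
    have hgd : ∀ s ∈ Set.Icc (0:ℝ) T, ‖g (x' s) - g (x s)‖ ≤ ε₀ := by
      intro s hs
      rw [← dist_eq_norm]
      exact (hδgP (x' s) (hmem2 s hs) (x s) (hK12 (hmem1 u hu s hs))
        ((hdist s hs).trans_le (min_le_left _ _))).le
    -- G bounds
    have hG'b : ∀ t ∈ Set.Icc (0:ℝ) T, ‖Gm g x' t‖ ≤ Kg * T :=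
      fun t ht => norm_intervalIntegral_le ht hKg hg'b
    have hG'c : ContinuousOn (Gm g x') (Set.Icc 0 T) :=
      continuousOn_primitive' hT.le (hg.comp_continuousOn hx'c)
    have hGdiff : ∀ t ∈ Set.Icc (0:ℝ) T, ‖Gm g x' t - Gm g x t‖ ≤ ε₀ * T := by
      intro t ht
      have heq : Gm g x' t - Gm g x t = ∫ s in (0:ℝ)..t, (g (x' s) - g (x s)) :=
        (intervalIntegral.integral_sub
          (intervalIntegrable' ht (hg.comp_continuousOn hx'c))
          (intervalIntegrable' ht (hg.comp_continuousOn (hxc u)))).symm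
      rw [heq]
      exact norm_intervalIntegral_le ht hε₀.le hgd
    -- Am difference
    have hAmdiff : ‖Am g x' T - Am g x T‖ ≤ ε₀ * T * T := by
      have heq : Am g x' T - Am g x T = ∫ t in (0:ℝ)..T, (Gm g x' t - Gm g x t) :=
        (intervalIntegral.integral_sub
          (intervalIntegrable' hTmem hG'c)
          (intervalIntegrable' hTmem (hGc u))).symm
      rw [heq]
      exact norm_intervalIntegral_le hTmem (mul_nonneg hε₀.le hT.le) hGdiff
    -- Bm difference
    have hBmdiff : ‖Bm g x' T - Bm g x T‖ ≤ 2 * (Kg * T) * (ε₀ * T) * T := by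
      have hB'c0 := continuous_transpose_mul.comp_continuousOn (hG'c.prodMk hG'c)
      have hBc0 := continuous_transpose_mul.comp_continuousOn ((hGc u).prodMk (hGc u))
      have hB'c : ContinuousOn (fun t => (Gm g x' t)ᵀ * Gm g x' t) (Set.Icc 0 T) := hB'c0
      have hBc : ContinuousOn (fun t => (Gm g x t)ᵀ * Gm g x t) (Set.Icc 0 T) := hBc0
      have heq : Bm g x' T - Bm g x T =
          ∫ t in (0:ℝ)..T, ((Gm g x' t)ᵀ * Gm g x' t - (Gm g x t)ᵀ * Gm g x t) :=
        (intervalIntegral.integral_sub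
          (intervalIntegrable' hTmem hB'c)
          (intervalIntegrable' hTmem hBc)).symm
      rw [heq]
      have hKgT : (0:ℝ) ≤ Kg * T := mul_nonneg hKg hT.le
      have hεT : (0:ℝ) ≤ ε₀ * T := mul_nonneg hε₀.le hT.le
      refine norm_intervalIntegral_le hTmem
        (mul_nonneg (mul_nonneg (by norm_num : (0:ℝ) ≤ 2) hKgT) hεT) ?_
      intro t ht
      exact norm_transpose_mul_sub_le (hG'b t ht) (hGb u hu t ht) (hGdiff t ht) hKgT hεT
    exact ⟨lt_of_le_of_lt hAmdiff hsm1, lt_of_le_of_lt hBmdiff hsm2⟩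

end ODECAux

open ODECAux

/-- Uniform consistency and boundedness of `Â_u, A_u, B̂_u, B_u`.
(`sup ≥ ε` statements are encoded in existential form; matrices carry the Frobenius norm.) -/
theorem stmt4 {Ω : Type*} [MeasurableSpace Ω] (P : MeasureTheory.Measure Ω)
    [MeasureTheory.IsProbabilityMeasure P]
    {r q p : ℕ} (hr : 0 < r) (hq : 0 < q) (hp : 0 < p) {T : ℝ} (hT : 0 < T)
    (g : EuclideanSpace ℝ (Fin (r + q)) → Matrix (Fin (r + q)) (Fin p) ℝ)
    (hg : Continuous g)
    (U : Set C(Set.Icc (0:ℝ) T, EuclideanSpace ℝ (Fin q)))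
    (hU : IsCompact U)
    (Un : ℕ → Set C(Set.Icc (0:ℝ) T, EuclideanSpace ℝ (Fin q)))
    (hUn : ∀ n, Un n ⊆ U) (hUne : ∀ n, (Un n).Nonempty) (hUnc : ∀ n, IsCompact (Un n))
    (m : ℝ → EuclideanSpace ℝ (Fin r)) (hm : ContinuousOn m (Set.Icc 0 T))
    (mhat : ℕ → Ω → C(Set.Icc (0:ℝ) T, EuclideanSpace ℝ (Fin r)))
    (hmeas : ∀ n, @Measurable Ω C(Set.Icc (0:ℝ) T, EuclideanSpace ℝ (Fin r)) _
      (borel _) (mhat n))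
    (hcons : ∀ ε > (0:ℝ), Filter.Tendsto (fun n =>
      P {ω | ∃ t : Set.Icc (0:ℝ) T, ε ≤ ‖mhat n ω t - m ↑t‖}) Filter.atTop (nhds 0)) :
    (∀ ε > (0:ℝ), Filter.Tendsto (fun n =>
      P {ω | ∃ u ∈ Un n,
        ε ≤ ‖Am g (pair (ext hT.le (mhat n ω)) (ext hT.le u)) T
              - Am g (pair m (ext hT.le u)) T‖}) Filter.atTop (nhds 0)) ∧
    (∃ C : ℝ, ∀ n, ∀ u ∈ Un n, ‖Am g (pair m (ext hT.le u)) T‖ ≤ C) ∧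
    (∀ δ > (0:ℝ), ∃ C : ℝ, ∀ᶠ n in Filter.atTop,
      P {ω | ∃ u ∈ Un n,
        C ≤ ‖Am g (pair (ext hT.le (mhat n ω)) (ext hT.le u)) T‖} < ENNReal.ofReal δ) ∧
    (∀ ε > (0:ℝ), Filter.Tendsto (fun n =>
      P {ω | ∃ u ∈ Un n,
        ε ≤ ‖Bm g (pair (ext hT.le (mhat n ω)) (ext hT.le u)) T
              - Bm g (pair m (ext hT.le u)) T‖}) Filter.atTop (nhds 0)) ∧
    (∃ C : ℝ, ∀ n, ∀ u ∈ Un n, ‖Bm g (pair m (ext hT.le u)) T‖ ≤ C) ∧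
    (∀ δ > (0:ℝ), ∃ C : ℝ, ∀ᶠ n in Filter.atTop,
      P {ω | ∃ u ∈ Un n,
        C ≤ ‖Bm g (pair (ext hT.le (mhat n ω)) (ext hT.le u)) T‖} < ENNReal.ofReal δ) := by
  obtain ⟨CA, CB, hbound, hkey⟩ := ODECAux.key hT g hg U hU m hm
  have hAcons : ∀ ε > (0:ℝ), Filter.Tendsto (fun n =>
      P {ω | ∃ u ∈ Un n,
        ε ≤ ‖Am g (pair (ext hT.le (mhat n ω)) (ext hT.le u)) T
              - Am g (pair m (ext hT.le u)) T‖}) Filter.atTop (nhds 0) := by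
    intro ε hε
    obtain ⟨δ, hδ, hclose⟩ := hkey ε hε
    refine tendsto_of_tendsto_of_tendsto_of_le_of_le tendsto_const_nhds (hcons δ hδ)
      (fun n => zero_le) (fun n => measure_mono ?_)
    intro ω hω
    simp only [Set.mem_setOf_eq] at hω ⊢
    obtain ⟨u, hu, hεle⟩ := hω
    by_contra hcontra
    push_neg at hcontra
    exact absurd hεle (not_le.2 ((hclose (mhat n ω) hcontra u (hUn n hu)).1))
  have hBcons : ∀ ε > (0:ℝ), Filter.Tendsto (fun n =>
      P {ω | ∃ u ∈ Un n,
        ε ≤ ‖Bm g (pair (ext hT.le (mhat n ω)) (ext hT.le u)) T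
              - Bm g (pair m (ext hT.le u)) T‖}) Filter.atTop (nhds 0) := by
    intro ε hε
    obtain ⟨δ, hδ, hclose⟩ := hkey ε hε
    refine tendsto_of_tendsto_of_tendsto_of_le_of_le tendsto_const_nhds (hcons δ hδ)
      (fun n => zero_le) (fun n => measure_mono ?_)
    intro ω hω
    simp only [Set.mem_setOf_eq] at hω ⊢
    obtain ⟨u, hu, hεle⟩ := hω
    by_contra hcontra
    push_neg at hcontra
    exact absurd hεle (not_le.2 ((hclose (mhat n ω) hcontra u (hUn n hu)).2))
  refine ⟨hAcons, ⟨CA, fun n u hu => (hbound u (hUn n hu)).1⟩, ?_, hBcons,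
    ⟨CB, fun n u hu => (hbound u (hUn n hu)).2⟩, ?_⟩
  · intro δ hδ
    refine ⟨CA + 1, ?_⟩
    have h1 := (hAcons 1 one_pos).eventually_lt_const (ENNReal.ofReal_pos.2 hδ)
    filter_upwards [h1] with n hn
    refine lt_of_le_of_lt (measure_mono ?_) hn
    intro ω hω
    simp only [Set.mem_setOf_eq] at hω ⊢
    obtain ⟨u, hu, hC⟩ := hω
    refine ⟨u, hu, ?_⟩
    have hA := (hbound u (hUn n hu)).1
    have hns := norm_sub_norm_le (Am g (pair (ext hT.le (mhat n ω)) (ext hT.le u)) T)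
      (Am g (pair m (ext hT.le u)) T)
    linarith
  · intro δ hδ
    refine ⟨CB + 1, ?_⟩
    have h1 := (hBcons 1 one_pos).eventually_lt_const (ENNReal.ofReal_pos.2 hδ)
    filter_upwards [h1] with n hn
    refine lt_of_le_of_lt (measure_mono ?_) hn
    intro ω hω
    simp only [Set.mem_setOf_eq] at hω ⊢
    obtain ⟨u, hu, hC⟩ := hω
    refine ⟨u, hu, ?_⟩
    have hB := (hbound u (hUn n hu)).2
    have hns := norm_sub_norm_le (Bm g (pair (ext hT.le (mhat n ω)) (ext hT.le u)) T)
      (Bm g (pair m (ext hT.le u)) T)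
    linarith
end
end

section
/- Assume g : ℝ^d → ℝ^{d×p} is continuous, U ⊂ C([0,T],ℝ^{d−r}) is compact under ‖·‖∞, U_n ⊆ U are nonempty compact subsets, m is continuous on [0,T], ‖m̂_n − m‖∞ → 0 in probability, and for every u ∈ U the matrices B_u and T·I_d − A_u B_u⁻¹ A_uᵀ are invertible, as are (almost surely) the corresponding hatted matrices for u ∈ U_n. Then: sup_{u∈U_n} ‖θ̂_u − θ_u‖ = o_P(1), sup_{u∈U_n} ‖θ_u‖ = O(1), and sup_{u∈U_n} ‖θ̂_u‖ = O_P(1). -/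
open MeasureTheory Filter
open scoped Matrix

attribute [local instance] Matrix.frobeniusSeminormedAddCommGroup
  Matrix.frobeniusNormedAddCommGroup Matrix.frobeniusNormedSpace

set_option maxHeartbeats 1000000

noncomputable section

open ODEC


namespace StmtAux

open Set intervalIntegral

variable {X : Type*} [TopologicalSpace X] {a b c : ℕ}

lemma cont_entry (i : Fin a) (j : Fin b) :
    Continuous fun A : Matrix (Fin a) (Fin b) ℝ => A i j := by
  have : (fun A : Matrix (Fin a) (Fin b) ℝ => A i j) =
      (Matrix.entryLinearMap ℝ ℝ i j : Matrix (Fin a) (Fin b) ℝ →ₗ[ℝ] ℝ) := rfl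
  rw [this]
  exact LinearMap.continuous_of_finiteDimensional _

lemma continuous_matrix_iff {f : X → Matrix (Fin a) (Fin b) ℝ} :
    Continuous f ↔ ∀ i j, Continuous fun x => f x i j := by
  constructor
  · intro h i j; exact (cont_entry i j).comp h
  · intro h
    have h2 : f = fun x => ∑ i, ∑ j, (f x i j) • Matrix.single i j (1:ℝ) := by
      funext x
      conv_lhs => rw [Matrix.matrix_eq_sum_single (f x)]
      refine Finset.sum_congr rfl fun i _ => Finset.sum_congr rfl fun j _ => ?_
      rw [Matrix.smul_single, smul_eq_mul, mul_one]
    rw [h2]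
    exact continuous_finset_sum _ fun i _ => continuous_finset_sum _ fun j _ =>
      (h i j).smul continuous_const

lemma cont_mul {f : X → Matrix (Fin a) (Fin b) ℝ} {g : X → Matrix (Fin b) (Fin c) ℝ}
    (hf : Continuous f) (hg : Continuous g) : Continuous fun x => f x * g x := by
  rw [continuous_matrix_iff] at *
  intro i j
  simp only [Matrix.mul_apply]
  exact continuous_finset_sum _ fun k _ => (hf i k).mul (hg k j)

lemma contAt_mul {f : X → Matrix (Fin a) (Fin b) ℝ} {g : X → Matrix (Fin b) (Fin c) ℝ} {x : X}
    (hf : ContinuousAt f x) (hg : ContinuousAt g x) : ContinuousAt (fun x => f x * g x) x := by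
  have h := (cont_mul (f := fun z : Matrix (Fin a) (Fin b) ℝ × Matrix (Fin b) (Fin c) ℝ => z.1)
    (g := fun z => z.2) continuous_fst continuous_snd).continuousAt (x := (f x, g x))
  have h2 : Filter.Tendsto ((fun z : Matrix (Fin a) (Fin b) ℝ × Matrix (Fin b) (Fin c) ℝ =>
      z.1 * z.2) ∘ fun x => (f x, g x)) (nhds x) (nhds (f x * g x)) :=
    Filter.Tendsto.comp h (hf.prodMk hg)
  exact h2

lemma cont_transpose {f : X → Matrix (Fin a) (Fin b) ℝ} (hf : Continuous f) :
    Continuous fun x => (f x)ᵀ := by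
  rw [continuous_matrix_iff] at *
  exact fun i j => hf j i

lemma cont_det {f : X → Matrix (Fin a) (Fin a) ℝ} (hf : Continuous f) :
    Continuous fun x => (f x).det := by
  simp only [Matrix.det_apply]
  exact continuous_finset_sum _ fun σ _ => (continuous_finset_prod _ fun i _ =>
    ((continuous_matrix_iff.1 hf) _ _)).zsmul _

lemma contAt_inv {A₀ : Matrix (Fin a) (Fin a) ℝ} (h : IsUnit A₀) :
    ContinuousAt (fun A : Matrix (Fin a) (Fin a) ℝ => A⁻¹) A₀ := by
  classical
  have hdet : A₀.det ≠ 0 :=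
    isUnit_iff_ne_zero.mp ((Matrix.isUnit_iff_isUnit_det A₀).mp h)
  have hadj : Continuous fun A : Matrix (Fin a) (Fin a) ℝ => A.adjugate := by
    rw [continuous_matrix_iff]
    intro i j
    simp only [Matrix.adjugate_apply]
    refine cont_det (continuous_matrix_iff.2 fun i' j' => ?_)
    by_cases hi : i' = j
    · simp only [hi, Matrix.updateRow_self]
      exact continuous_const
    · simp only [Matrix.updateRow_ne hi]
      exact (continuous_matrix_iff.1 continuous_id) i' j'
  have heq : ∀ A : Matrix (Fin a) (Fin a) ℝ, A⁻¹ = (A.det)⁻¹ • A.adjugate := by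
    intro A; rw [Matrix.inv_def, Ring.inverse_eq_inv']
  simp only [heq]
  exact (((cont_det continuous_id).continuousAt).inv₀ hdet).smul hadj.continuousAt

lemma euc_ext {x y : EuclideanSpace ℝ (Fin a)} (h : ∀ i, x i = y i) : x = y := (WithLp.equiv 2 _).injective (funext h)

lemma mv_apply (A : Matrix (Fin a) (Fin b) ℝ) (v : EuclideanSpace ℝ (Fin b)) (i : Fin a) :
    mv A v i = ∑ j, A i j * v j := by
  simp [mv, Matrix.toEuclideanLin_apply, Matrix.mulVec, dotProduct]

lemma continuous_euc_iff {f : X → EuclideanSpace ℝ (Fin a)} :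
    Continuous f ↔ ∀ i, Continuous fun x => f x i := by
  constructor
  · intro h i; exact (EuclideanSpace.proj i).continuous.comp h
  · intro h
    exact (PiLp.continuous_toLp (p := 2) (β := fun _ : Fin a => ℝ)).comp (continuous_pi h)

lemma cont_mv : Continuous fun z : Matrix (Fin a) (Fin b) ℝ × EuclideanSpace ℝ (Fin b) =>
    mv z.1 z.2 := by
  rw [continuous_euc_iff]
  intro i
  simp only [mv_apply]
  exact continuous_finset_sum _ fun j _ =>
    ((cont_entry i j).comp continuous_fst).mul
      (((EuclideanSpace.proj j).continuous).comp continuous_snd)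

lemma contAt_mv {f : X → Matrix (Fin a) (Fin b) ℝ} {g : X → EuclideanSpace ℝ (Fin b)} {x : X}
    (hf : ContinuousAt f x) (hg : ContinuousAt g x) :
    ContinuousAt (fun x => mv (f x) (g x)) x := by
  have h := cont_mv.continuousAt (x := (f x, g x))
  have h2 : Filter.Tendsto ((fun z : Matrix (Fin a) (Fin b) ℝ × EuclideanSpace ℝ (Fin b) =>
      mv z.1 z.2) ∘ fun x => (f x, g x)) (nhds x) (nhds (mv (f x) (g x))) :=
    Filter.Tendsto.comp h (hf.prodMk hg)
  exact h2

lemma cont_mv2 {f : X → Matrix (Fin a) (Fin b) ℝ} {g : X → EuclideanSpace ℝ (Fin b)}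
    (hf : Continuous f) (hg : Continuous g) : Continuous fun x => mv (f x) (g x) := by
  rw [continuous_euc_iff]
  intro i
  simp only [mv_apply]
  exact continuous_finset_sum _ fun j _ =>
    ((continuous_matrix_iff.1 hf) i j).mul (continuous_euc_iff.1 hg j)

lemma mv_one (v : EuclideanSpace ℝ (Fin a)) : mv 1 v = v := by
  refine euc_ext fun i => ?_
  rw [mv_apply]
  simp [Matrix.one_apply]

lemma mv_sub_mat (A B : Matrix (Fin a) (Fin b) ℝ) (v : EuclideanSpace ℝ (Fin b)) :
    mv (A - B) v = mv A v - mv B v := by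
  simp only [mv, map_sub, LinearMap.sub_apply]

lemma mv_sub_vec (A : Matrix (Fin a) (Fin b) ℝ) (v w : EuclideanSpace ℝ (Fin b)) :
    mv A (v - w) = mv A v - mv A w := by
  simp only [mv, map_sub]

lemma mv_mul (A : Matrix (Fin a) (Fin b) ℝ) (B : Matrix (Fin b) (Fin c) ℝ)
    (v : EuclideanSpace ℝ (Fin c)) : mv (A * B) v = mv A (mv B v) := by
  refine euc_ext fun i => ?_
  simp only [mv_apply, Matrix.mul_apply, Finset.sum_mul, Finset.mul_sum]
  rw [Finset.sum_comm]
  exact Finset.sum_congr rfl fun j _ => Finset.sum_congr rfl fun k _ => by ring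

section Main

variable {r q p : ℕ} {T : ℝ}

/-- the parameter space: a pair of continuous functions on `[0,T]`. -/
abbrev Xsp (T : ℝ) (r q : ℕ) : Type :=
  C(Set.Icc (0:ℝ) T, EuclideanSpace ℝ (Fin r)) × C(Set.Icc (0:ℝ) T, EuclideanSpace ℝ (Fin q))

/-- the combined trajectory associated to a parameter pair. -/
def xf (hT : 0 < T) (v : Xsp T r q) : ℝ → EuclideanSpace ℝ (Fin (r + q)) :=
  pair (ext hT.le v.1) (ext hT.le v.2)

lemma cont_evalC (hT : 0 < T) {E : Type*} [TopologicalSpace E] :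
    Continuous fun pr : C(Set.Icc (0:ℝ) T, E) × ℝ => ext hT.le pr.1 pr.2 := by
  have h1 : Continuous fun pr : C(Set.Icc (0:ℝ) T, E) × ℝ =>
      (pr.1, Set.projIcc 0 T hT.le pr.2) :=
    continuous_fst.prodMk (continuous_projIcc.comp continuous_snd)
  exact ContinuousEval.continuous_eval.comp h1

lemma cont_xf (hT : 0 < T) : Continuous fun pr : Xsp T r q × ℝ => xf hT pr.1 pr.2 := by
  rw [continuous_euc_iff]
  intro i
  refine Fin.addCases (motive := fun i => Continuous fun pr : Xsp T r q × ℝ =>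
    xf hT pr.1 pr.2 i) ?_ ?_ i
  · intro j
    have he : ∀ pr : Xsp T r q × ℝ, xf hT pr.1 pr.2 (Fin.castAdd q j) =
        ext hT.le pr.1.1 pr.2 j := by
      intro pr; simp [xf, pair, Fin.append_left]
    simp only [he]
    exact continuous_euc_iff.1
      ((cont_evalC hT).comp ((continuous_fst.comp continuous_fst).prodMk continuous_snd)) j
  · intro j
    have he : ∀ pr : Xsp T r q × ℝ, xf hT pr.1 pr.2 (Fin.natAdd r j) =
        ext hT.le pr.1.2 pr.2 j := by
      intro pr; simp [xf, pair, Fin.append_right]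
    simp only [he]
    exact continuous_euc_iff.1
      ((cont_evalC hT).comp ((continuous_snd.comp continuous_fst).prodMk continuous_snd)) j

variable (g : EuclideanSpace ℝ (Fin (r + q)) → Matrix (Fin (r + q)) (Fin p) ℝ)

lemma cont_Gf (hT : 0 < T) (hg : Continuous g) :
    Continuous fun pr : Xsp T r q × ℝ => Gm g (xf hT pr.1) pr.2 :=
  intervalIntegral.continuous_parametric_intervalIntegral_of_continuous
    (f := fun (pr : Xsp T r q × ℝ) (s : ℝ) => g (xf hT pr.1 s))
    ((hg.comp (cont_xf hT)).comp
      (((continuous_fst.comp continuous_fst).prodMk continuous_snd)))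
    continuous_snd

lemma cont_Gt {x : ℝ → EuclideanSpace ℝ (Fin (r + q))} (hx : Continuous x) (hg : Continuous g) :
    Continuous fun t : ℝ => Gm g x t :=
  intervalIntegral.continuous_parametric_intervalIntegral_of_continuous
    (f := fun (_ : ℝ) (s : ℝ) => g (x s)) ((hg.comp hx).comp continuous_snd) continuous_id

lemma cont_Af (hT : 0 < T) (hg : Continuous g) :
    Continuous fun v : Xsp T r q => Am g (xf hT v) T :=
  intervalIntegral.continuous_parametric_intervalIntegral_of_continuous'
    (μ := MeasureTheory.volume)
    (f := fun (v : Xsp T r q) (t : ℝ) => Gm g (xf hT v) t) (cont_Gf g hT hg) 0 T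

lemma cont_Bf (hT : 0 < T) (hg : Continuous g) :
    Continuous fun v : Xsp T r q => Bm g (xf hT v) T :=
  intervalIntegral.continuous_parametric_intervalIntegral_of_continuous'
    (μ := MeasureTheory.volume)
    (f := fun (v : Xsp T r q) (t : ℝ) => (Gm g (xf hT v) t)ᵀ * Gm g (xf hT v) t)
    (cont_mul (cont_transpose (cont_Gf g hT hg)) (cont_Gf g hT hg)) 0 T

lemma cont_I1 (hT : 0 < T) :
    Continuous fun v : Xsp T r q => ∫ t in (0:ℝ)..T, xf hT v t :=
  intervalIntegral.continuous_parametric_intervalIntegral_of_continuous'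
    (μ := MeasureTheory.volume)
    (f := fun (v : Xsp T r q) (t : ℝ) => xf hT v t) (cont_xf hT) 0 T

lemma cont_I2 (hT : 0 < T) (hg : Continuous g) :
    Continuous fun v : Xsp T r q => ∫ t in (0:ℝ)..T, mv (Gm g (xf hT v) t)ᵀ (xf hT v t) :=
  by
  have hF : Continuous fun pr : Xsp T r q × ℝ =>
      mv (Gm g (xf hT pr.1) pr.2)ᵀ (xf hT pr.1 pr.2) :=
    cont_mv2 (cont_transpose (cont_Gf g hT hg)) (cont_xf hT)
  exact intervalIntegral.continuous_parametric_intervalIntegral_of_continuous'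
    (μ := MeasureTheory.volume)
    (f := fun (v : Xsp T r q) (t : ℝ) => mv (Gm g (xf hT v) t)ᵀ (xf hT v t)) hF 0 T

/-- `mv Mᵀ ξ` as a linear map in `M`. -/
def mvT (ξ : EuclideanSpace ℝ (Fin (r + q))) :
    Matrix (Fin (r + q)) (Fin p) ℝ →ₗ[ℝ] EuclideanSpace ℝ (Fin p) where
  toFun M := mv Mᵀ ξ
  map_add' M N := by
    simp only [Matrix.transpose_add, mv, map_add, LinearMap.add_apply]
  map_smul' c M := by
    simp only [Matrix.transpose_smul, mv, _root_.map_smul, LinearMap.smul_apply, RingHom.id_apply]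

lemma mv_mvT (M : Matrix (Fin (r + q)) (Fin p) ℝ) (ξ : EuclideanSpace ℝ (Fin (r + q))) :
    mv Mᵀ ξ = mvT ξ M := rfl

lemma intApp (x : ℝ → EuclideanSpace ℝ (Fin (r + q))) :
    (∫ t in (0:ℝ)..T, Gm g x t) = Am g x T := rfl

lemma xiv_eq {x : ℝ → EuclideanSpace ℝ (Fin (r + q))} (hx : Continuous x) (hg : Continuous g) :
    xiv g x T = mv (Cm g x T)⁻¹ ((∫ t in (0:ℝ)..T, x t) -
      mv (Am g x T * (Bm g x T)⁻¹) (∫ t in (0:ℝ)..T, mv (Gm g x t)ᵀ (x t))) := by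
  have hG : Continuous fun t : ℝ => Gm g x t := cont_Gt g hx hg
  have h1 : ∀ t : ℝ, mv (1 - Am g x T * (Bm g x T)⁻¹ * (Gm g x t)ᵀ) (x t) =
      x t - mv (Am g x T * (Bm g x T)⁻¹) (mv (Gm g x t)ᵀ (x t)) := by
    intro t
    rw [mv_sub_mat, mv_one, mv_mul]
  have hint : IntervalIntegrable (fun t => mv (Gm g x t)ᵀ (x t)) MeasureTheory.volume 0 T :=
    (cont_mv2 (cont_transpose hG) hx).intervalIntegrable 0 T
  have h2 : (∫ t in (0:ℝ)..T, mv (1 - Am g x T * (Bm g x T)⁻¹ * (Gm g x t)ᵀ) (x t)) =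
      (∫ t in (0:ℝ)..T, x t) -
        mv (Am g x T * (Bm g x T)⁻¹) (∫ t in (0:ℝ)..T, mv (Gm g x t)ᵀ (x t)) := by
    simp only [h1]
    have hi1 : IntervalIntegrable (fun t : ℝ => x t) MeasureTheory.volume 0 T :=
      hx.intervalIntegrable 0 T
    have hc2 : Continuous fun t : ℝ =>
        mv (Am g x T * (Bm g x T)⁻¹) (mv (Gm g x t)ᵀ (x t)) :=
      cont_mv2 continuous_const (cont_mv2 (cont_transpose hG) hx)
    have hi2 : IntervalIntegrable (fun t : ℝ =>
        mv (Am g x T * (Bm g x T)⁻¹) (mv (Gm g x t)ᵀ (x t))) MeasureTheory.volume 0 T :=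
      hc2.intervalIntegrable 0 T
    rw [intervalIntegral.integral_sub hi1 hi2]
    congr 1
    have h3 := (LinearMap.toContinuousLinearMap
      (Matrix.toEuclideanLin (Am g x T * (Bm g x T)⁻¹))).intervalIntegral_comp_comm hint
    exact h3
  rw [xiv, h2]

lemma thv_eq {x : ℝ → EuclideanSpace ℝ (Fin (r + q))} (hx : Continuous x) (hg : Continuous g) :
    thv g x T = mv (Bm g x T)⁻¹ ((∫ t in (0:ℝ)..T, mv (Gm g x t)ᵀ (x t)) -
      mv (Am g x T)ᵀ (xiv g x T)) := by
  have hG : Continuous fun t : ℝ => Gm g x t := cont_Gt g hx hg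
  have h1 : ∀ t : ℝ, mv (Gm g x t)ᵀ (x t - xiv g x T) =
      mv (Gm g x t)ᵀ (x t) - mvT (xiv g x T) (Gm g x t) := by
    intro t
    rw [mv_sub_vec]
    exact congrArg (fun z => mv (Gm g x t)ᵀ (x t) - z) (mv_mvT (Gm g x t) (xiv g x T))
  have h2 : (∫ t in (0:ℝ)..T, mvT (xiv g x T) (Gm g x t)) = mv (Am g x T)ᵀ (xiv g x T) := by
    have h5 := (LinearMap.toContinuousLinearMap (mvT (ξ := xiv g x T) (p := p))
      ).intervalIntegral_comp_comm
        (hG.intervalIntegrable (μ := MeasureTheory.volume) 0 T)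
    have hL : ∀ M : Matrix (Fin (r + q)) (Fin p) ℝ,
        (LinearMap.toContinuousLinearMap (mvT (ξ := xiv g x T) (p := p))) M =
          mvT (xiv g x T) M := fun M => rfl
    simp only [hL] at h5
    rw [show (∫ t in (0:ℝ)..T, mvT (xiv g x T) (Gm g x t)) =
      mvT (xiv g x T) (∫ t in (0:ℝ)..T, Gm g x t) from h5, intApp]
    exact (mv_mvT _ _).symm
  rw [thv]
  refine congrArg (mv (Bm g x T)⁻¹) ?_
  simp only [h1]
  have hi1 : IntervalIntegrable (fun t : ℝ => mv (Gm g x t)ᵀ (x t))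
      MeasureTheory.volume 0 T := by
    have hc : Continuous fun t : ℝ => mv (Gm g x t)ᵀ (x t) :=
      cont_mv2 (cont_transpose hG) hx
    exact hc.intervalIntegrable 0 T
  have hi2 : IntervalIntegrable (fun t : ℝ => mvT (xiv g x T) (Gm g x t))
      MeasureTheory.volume 0 T := by
    have hc : Continuous fun t : ℝ => mvT (xiv g x T) (Gm g x t) :=
      ((LinearMap.toContinuousLinearMap (mvT (ξ := xiv g x T) (p := p))
        ).continuous).comp hG
    exact hc.intervalIntegrable 0 T
  rw [intervalIntegral.integral_sub hi1 hi2, h2]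

end Main

section Congr

variable {n p : ℕ} {T : ℝ}
variable (g : EuclideanSpace ℝ (Fin n) → Matrix (Fin n) (Fin p) ℝ)
variable {x y : ℝ → EuclideanSpace ℝ (Fin n)}

lemma Gm_congr (h : Set.EqOn x y (Set.Icc 0 T)) {t : ℝ} (ht : t ∈ Set.Icc (0:ℝ) T) :
    Gm g x t = Gm g y t := by
  refine intervalIntegral.integral_congr fun s hs => ?_
  rw [Set.uIcc_of_le ht.1] at hs
  exact congrArg g (h (Set.Icc_subset_Icc le_rfl ht.2 hs))

lemma Am_congr (hT : 0 ≤ T) (h : Set.EqOn x y (Set.Icc 0 T)) : Am g x T = Am g y T := by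
  refine intervalIntegral.integral_congr fun t ht => ?_
  rw [Set.uIcc_of_le hT] at ht
  exact Gm_congr g h ht

lemma Bm_congr (hT : 0 ≤ T) (h : Set.EqOn x y (Set.Icc 0 T)) : Bm g x T = Bm g y T := by
  refine intervalIntegral.integral_congr fun t ht => ?_
  rw [Set.uIcc_of_le hT] at ht
  rw [Gm_congr g h ht]

lemma Cm_congr (hT : 0 ≤ T) (h : Set.EqOn x y (Set.Icc 0 T)) : Cm g x T = Cm g y T := by
  rw [Cm, Cm, Am_congr g hT h, Bm_congr g hT h]

lemma xiv_congr (hT : 0 ≤ T) (h : Set.EqOn x y (Set.Icc 0 T)) : xiv g x T = xiv g y T := by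
  rw [xiv, xiv, Cm_congr g hT h, Am_congr g hT h, Bm_congr g hT h]
  refine congrArg _ ?_
  refine intervalIntegral.integral_congr (μ := MeasureTheory.volume) fun t ht => ?_
  rw [Set.uIcc_of_le hT] at ht
  rw [Gm_congr g h ht, h ht]

lemma thv_congr (hT : 0 ≤ T) (h : Set.EqOn x y (Set.Icc 0 T)) : thv g x T = thv g y T := by
  rw [thv, thv, Bm_congr g hT h]
  refine congrArg _ ?_
  refine intervalIntegral.integral_congr (μ := MeasureTheory.volume) fun t ht => ?_
  rw [Set.uIcc_of_le hT] at ht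
  rw [Gm_congr g h ht, h ht, xiv_congr g hT h]

end Congr

end StmtAux

/-- Uniform consistency and boundedness of `θ̂_u` and `θ_u`.
(`sup ≥ ε` statements are encoded in existential form; `‖·‖` is the Euclidean norm.) -/
theorem stmt6 {Ω : Type*} [MeasurableSpace Ω] (P : MeasureTheory.Measure Ω)
    [MeasureTheory.IsProbabilityMeasure P]
    {r q p : ℕ} (hr : 0 < r) (hq : 0 < q) (hp : 0 < p) {T : ℝ} (hT : 0 < T)
    (g : EuclideanSpace ℝ (Fin (r + q)) → Matrix (Fin (r + q)) (Fin p) ℝ)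
    (hg : Continuous g)
    (U : Set C(Set.Icc (0:ℝ) T, EuclideanSpace ℝ (Fin q)))
    (hU : IsCompact U)
    (Un : ℕ → Set C(Set.Icc (0:ℝ) T, EuclideanSpace ℝ (Fin q)))
    (hUn : ∀ n, Un n ⊆ U) (hUne : ∀ n, (Un n).Nonempty) (hUnc : ∀ n, IsCompact (Un n))
    (m : ℝ → EuclideanSpace ℝ (Fin r)) (hm : ContinuousOn m (Set.Icc 0 T))
    (mhat : ℕ → Ω → C(Set.Icc (0:ℝ) T, EuclideanSpace ℝ (Fin r)))
    (hmeas : ∀ n, @Measurable Ω C(Set.Icc (0:ℝ) T, EuclideanSpace ℝ (Fin r)) _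
      (borel _) (mhat n))
    (hcons : ∀ ε > (0:ℝ), Filter.Tendsto (fun n =>
      P {ω | ∃ t : Set.Icc (0:ℝ) T, ε ≤ ‖mhat n ω t - m ↑t‖}) Filter.atTop (nhds 0))
    (hinv : ∀ u ∈ U, IsUnit (Bm g (pair m (ext hT.le u)) T) ∧
      IsUnit (Cm g (pair m (ext hT.le u)) T))
    (hinvhat : ∀ n, ∀ᵐ ω ∂P, ∀ u ∈ Un n,
      IsUnit (Bm g (pair (ext hT.le (mhat n ω)) (ext hT.le u)) T) ∧
      IsUnit (Cm g (pair (ext hT.le (mhat n ω)) (ext hT.le u)) T)) :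
    (∀ ε > (0:ℝ), Filter.Tendsto (fun n =>
      P {ω | ∃ u ∈ Un n,
        ε ≤ ‖thv g (pair (ext hT.le (mhat n ω)) (ext hT.le u)) T
              - thv g (pair m (ext hT.le u)) T‖}) Filter.atTop (nhds 0)) ∧
    (∃ C : ℝ, ∀ n, ∀ u ∈ Un n, ‖thv g (pair m (ext hT.le u)) T‖ ≤ C) ∧
    (∀ δ > (0:ℝ), ∃ C : ℝ, ∀ᶠ n in Filter.atTop,
      P {ω | ∃ u ∈ Un n,
        C ≤ ‖thv g (pair (ext hT.le (mhat n ω)) (ext hT.le u)) T‖} < ENNReal.ofReal δ) := by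
  classical
  -- the restriction of `m` as a continuous map
  set m₀ : C(Set.Icc (0:ℝ) T, EuclideanSpace ℝ (Fin r)) := ⟨fun t => m ↑t, hm.restrict⟩ with hm₀
  -- the parametrized estimator map
  set Φ : StmtAux.Xsp T r q → EuclideanSpace ℝ (Fin p) :=
    fun v => thv g (StmtAux.xf hT v) T with hΦ
  -- trajectories agree on `[0,T]`
  have hEq : ∀ u : C(Set.Icc (0:ℝ) T, EuclideanSpace ℝ (Fin q)),
      Set.EqOn (StmtAux.xf hT (m₀, u)) (pair m (ext hT.le u)) (Set.Icc 0 T) := by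
    intro u t ht
    show pair (ext hT.le m₀) (ext hT.le u) t = pair m (ext hT.le u) t
    have hext : ext hT.le m₀ t = m t := by
      simp only [ext, Set.projIcc_of_mem hT.le ht]
      rfl
    unfold pair
    rw [hext]
  have hθ : ∀ u, thv g (pair m (ext hT.le u)) T = Φ (m₀, u) :=
    fun u => (StmtAux.thv_congr g hT.le (hEq u)).symm
  have hB0 : ∀ u ∈ U, IsUnit (Bm g (StmtAux.xf hT (m₀, u)) T) ∧
      IsUnit (Cm g (StmtAux.xf hT (m₀, u)) T) := by
    intro u hu
    rw [StmtAux.Bm_congr g hT.le (hEq u), StmtAux.Cm_congr g hT.le (hEq u)]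
    exact hinv u hu
  -- the set where the matrices are invertible
  set W : Set (StmtAux.Xsp T r q) :=
    {v | IsUnit (Bm g (StmtAux.xf hT v) T) ∧ IsUnit (Cm g (StmtAux.xf hT v) T)} with hW
  have hBfc : Continuous fun v : StmtAux.Xsp T r q => Bm g (StmtAux.xf hT v) T :=
    StmtAux.cont_Bf g hT hg
  have hAfc : Continuous fun v : StmtAux.Xsp T r q => Am g (StmtAux.xf hT v) T :=
    StmtAux.cont_Af g hT hg
  have hUnitIff : ∀ {k : ℕ} (A : Matrix (Fin k) (Fin k) ℝ), IsUnit A ↔ A.det ≠ 0 := by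
    intro k A; rw [Matrix.isUnit_iff_isUnit_det, isUnit_iff_ne_zero]
  have hW1open : IsOpen {v : StmtAux.Xsp T r q | IsUnit (Bm g (StmtAux.xf hT v) T)} := by
    have h2 : {v : StmtAux.Xsp T r q | IsUnit (Bm g (StmtAux.xf hT v) T)} =
        (fun v : StmtAux.Xsp T r q => (Bm g (StmtAux.xf hT v) T).det) ⁻¹' {x : ℝ | x ≠ 0} := by
      ext v; simp [hUnitIff]
    rw [h2]
    exact isOpen_ne.preimage (StmtAux.cont_det hBfc)
  have hCfOn : ContinuousOn (fun v : StmtAux.Xsp T r q => Cm g (StmtAux.xf hT v) T)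
      {v : StmtAux.Xsp T r q | IsUnit (Bm g (StmtAux.xf hT v) T)} := by
    intro v hv
    refine ContinuousAt.continuousWithinAt ?_
    have hBi : ContinuousAt (fun v : StmtAux.Xsp T r q => (Bm g (StmtAux.xf hT v) T)⁻¹) v := by
      have h2 : Filter.Tendsto ((fun A : Matrix (Fin p) (Fin p) ℝ => A⁻¹) ∘
          fun v : StmtAux.Xsp T r q => Bm g (StmtAux.xf hT v) T) (nhds v)
          (nhds (Bm g (StmtAux.xf hT v) T)⁻¹) :=
        Filter.Tendsto.comp (StmtAux.contAt_inv hv) hBfc.continuousAt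
      exact h2
    have hCeq : (fun v : StmtAux.Xsp T r q => Cm g (StmtAux.xf hT v) T) =
        fun v : StmtAux.Xsp T r q => T • (1 : Matrix (Fin (r+q)) (Fin (r+q)) ℝ) -
          Am g (StmtAux.xf hT v) T * (Bm g (StmtAux.xf hT v) T)⁻¹ *
            (Am g (StmtAux.xf hT v) T)ᵀ := rfl
    rw [hCeq]
    exact continuousAt_const.sub (StmtAux.contAt_mul
      (StmtAux.contAt_mul hAfc.continuousAt hBi) (StmtAux.cont_transpose hAfc).continuousAt)
  have hWopen : IsOpen W := by
    have h2 : W = {v : StmtAux.Xsp T r q | IsUnit (Bm g (StmtAux.xf hT v) T)} ∩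
        ((fun v : StmtAux.Xsp T r q => Cm g (StmtAux.xf hT v) T) ⁻¹'
          {A : Matrix (Fin (r+q)) (Fin (r+q)) ℝ | IsUnit A}) := by
      ext v; simp [hW, Set.mem_setOf_eq, Set.mem_inter_iff]
    have hUopen : IsOpen {A : Matrix (Fin (r+q)) (Fin (r+q)) ℝ | IsUnit A} := by
      have h3 : {A : Matrix (Fin (r+q)) (Fin (r+q)) ℝ | IsUnit A} =
          (fun A : Matrix (Fin (r+q)) (Fin (r+q)) ℝ => A.det) ⁻¹' {x : ℝ | x ≠ 0} := by
        ext A; simp [hUnitIff]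
      rw [h3]
      exact isOpen_ne.preimage (StmtAux.cont_det continuous_id)
    rw [h2]
    exact hCfOn.isOpen_inter_preimage hW1open hUopen
  -- continuity of Φ on W
  have hxft : ∀ v : StmtAux.Xsp T r q, Continuous fun t : ℝ => StmtAux.xf hT v t :=
    fun v => (StmtAux.cont_xf hT).comp (continuous_const.prodMk continuous_id)
  have hPhiOn : ContinuousOn Φ W := by
    intro v₀ hv₀
    refine ContinuousAt.continuousWithinAt ?_
    have hBi : ContinuousAt (fun v : StmtAux.Xsp T r q => (Bm g (StmtAux.xf hT v) T)⁻¹) v₀ := by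
      have h2 : Filter.Tendsto ((fun A : Matrix (Fin p) (Fin p) ℝ => A⁻¹) ∘
          fun v : StmtAux.Xsp T r q => Bm g (StmtAux.xf hT v) T) (nhds v₀)
          (nhds (Bm g (StmtAux.xf hT v₀) T)⁻¹) :=
        Filter.Tendsto.comp (StmtAux.contAt_inv hv₀.1) hBfc.continuousAt
      exact h2
    have hCAt : ContinuousAt (fun v : StmtAux.Xsp T r q => Cm g (StmtAux.xf hT v) T) v₀ :=
      hCfOn.continuousAt (hW1open.mem_nhds hv₀.1)
    have hCi : ContinuousAt (fun v : StmtAux.Xsp T r q => (Cm g (StmtAux.xf hT v) T)⁻¹) v₀ := by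
      have h2 : Filter.Tendsto ((fun A : Matrix (Fin (r+q)) (Fin (r+q)) ℝ => A⁻¹) ∘
          fun v : StmtAux.Xsp T r q => Cm g (StmtAux.xf hT v) T) (nhds v₀)
          (nhds (Cm g (StmtAux.xf hT v₀) T)⁻¹) :=
        Filter.Tendsto.comp (StmtAux.contAt_inv hv₀.2) hCAt
      exact h2
    have hXi : ContinuousAt (fun v : StmtAux.Xsp T r q => xiv g (StmtAux.xf hT v) T) v₀ := by
      have hxeq : (fun v : StmtAux.Xsp T r q => xiv g (StmtAux.xf hT v) T) =
          fun v : StmtAux.Xsp T r q => mv (Cm g (StmtAux.xf hT v) T)⁻¹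
            ((∫ t in (0:ℝ)..T, StmtAux.xf hT v t) -
              mv (Am g (StmtAux.xf hT v) T * (Bm g (StmtAux.xf hT v) T)⁻¹)
                (∫ t in (0:ℝ)..T, mv (Gm g (StmtAux.xf hT v) t)ᵀ (StmtAux.xf hT v t))) :=
        funext fun v => StmtAux.xiv_eq g (hxft v) hg
      rw [hxeq]
      exact StmtAux.contAt_mv hCi ((StmtAux.cont_I1 hT).continuousAt.sub
        (StmtAux.contAt_mv (StmtAux.contAt_mul hAfc.continuousAt hBi)
          (StmtAux.cont_I2 g hT hg).continuousAt))
    have hteq : Φ = fun v : StmtAux.Xsp T r q => mv (Bm g (StmtAux.xf hT v) T)⁻¹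
        ((∫ t in (0:ℝ)..T, mv (Gm g (StmtAux.xf hT v) t)ᵀ (StmtAux.xf hT v t)) -
          mv (Am g (StmtAux.xf hT v) T)ᵀ (xiv g (StmtAux.xf hT v) T)) := by
      rw [hΦ]
      exact funext fun v => StmtAux.thv_eq g (hxft v) hg
    rw [hteq]
    exact StmtAux.contAt_mv hBi ((StmtAux.cont_I2 g hT hg).continuousAt.sub
      (StmtAux.contAt_mv (StmtAux.cont_transpose hAfc).continuousAt hXi))
  -- part 1
  have part1 : ∀ ε > (0:ℝ), Filter.Tendsto (fun n =>
      P {ω | ∃ u ∈ Un n,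
        ε ≤ ‖thv g (pair (ext hT.le (mhat n ω)) (ext hT.le u)) T
              - thv g (pair m (ext hT.le u)) T‖}) Filter.atTop (nhds 0) := by
    intro ε hε
    have hc2 : Continuous fun v : StmtAux.Xsp T r q => ((m₀, v.2) : StmtAux.Xsp T r q) :=
      continuous_const.prodMk continuous_snd
    set W' := W ∩ (fun v : StmtAux.Xsp T r q => ((m₀, v.2) : StmtAux.Xsp T r q)) ⁻¹' W with hW'
    have hW'open : IsOpen W' := hWopen.inter (hWopen.preimage hc2)
    have hΨOn : ContinuousOn (fun v : StmtAux.Xsp T r q => ‖Φ v - Φ (m₀, v.2)‖) W' :=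
      ((hPhiOn.mono Set.inter_subset_left).sub
        (hPhiOn.comp hc2.continuousOn fun v hv => hv.2)).norm
    set N := W' ∩ (fun v : StmtAux.Xsp T r q => ‖Φ v - Φ (m₀, v.2)‖) ⁻¹' Set.Iio ε with hN
    have hNopen : IsOpen N := hΨOn.isOpen_inter_preimage hW'open isOpen_Iio
    have hKN : ({m₀} ×ˢ U : Set (StmtAux.Xsp T r q)) ⊆ N := by
      rintro ⟨f, u⟩ ⟨hf, hu⟩
      simp only [Set.mem_singleton_iff] at hf
      subst hf
      have hvW : ((m₀, u) : StmtAux.Xsp T r q) ∈ W := hB0 u hu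
      exact ⟨⟨hvW, hvW⟩, by simpa using hε⟩
    obtain ⟨O₁, O₂, hO₁, hO₂, hmO, hUO, hsub⟩ :=
      generalized_tube_lemma isCompact_singleton hU hNopen hKN
    obtain ⟨δ, hδ, hball⟩ := Metric.isOpen_iff.1 hO₁ m₀ (hmO rfl)
    have hincl : ∀ n, {ω | ∃ u ∈ Un n,
        ε ≤ ‖thv g (pair (ext hT.le (mhat n ω)) (ext hT.le u)) T
              - thv g (pair m (ext hT.le u)) T‖} ⊆
        {ω | ∃ t : Set.Icc (0:ℝ) T, δ/2 ≤ ‖mhat n ω t - m ↑t‖} := by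
      intro n ω hω
      obtain ⟨u, hu, hgeε⟩ := hω
      by_contra hcon
      simp only [Set.mem_setOf_eq, not_exists, not_le] at hcon
      have hd : dist (mhat n ω) m₀ ≤ δ/2 :=
        (ContinuousMap.dist_le (by positivity)).2 fun t => by
          rw [dist_eq_norm]
          exact (hcon t).le
      have hmem : ((mhat n ω, u) : StmtAux.Xsp T r q) ∈ N :=
        hsub ⟨hball (show dist (mhat n ω) m₀ < δ by linarith), hUO (hUn n hu)⟩
      have hΨlt : ‖Φ (mhat n ω, u) - Φ (m₀, u)‖ < ε := hmem.2
      have h1 : thv g (pair (ext hT.le (mhat n ω)) (ext hT.le u)) T = Φ (mhat n ω, u) := rfl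
      rw [h1, hθ u] at hgeε
      exact absurd hgeε (not_le.2 hΨlt)
    exact tendsto_of_tendsto_of_tendsto_of_le_of_le tendsto_const_nhds
      (hcons (δ/2) (by positivity)) (fun n => zero_le) (fun n => measure_mono (hincl n))
  -- part 2
  have hKW : ({m₀} ×ˢ U : Set (StmtAux.Xsp T r q)) ⊆ W := by
    rintro ⟨f, u⟩ ⟨hf, hu⟩
    simp only [Set.mem_singleton_iff] at hf
    subst hf
    exact hB0 u hu
  obtain ⟨C, hC⟩ := (isCompact_singleton.prod hU).exists_bound_of_continuousOn
    (hPhiOn.mono hKW)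
  have part2 : ∀ u ∈ U, ‖thv g (pair m (ext hT.le u)) T‖ ≤ C := by
    intro u hu
    rw [hθ u]
    exact hC (m₀, u) ⟨rfl, hu⟩
  refine ⟨part1, ⟨C, fun n u hu => part2 u (hUn n hu)⟩, ?_⟩
  -- part 3
  intro δ hδ
  refine ⟨C + 1, ?_⟩
  have h2 := (part1 1 one_pos).eventually_lt_const (ENNReal.ofReal_pos.2 hδ)
  filter_upwards [h2] with n hn
  refine lt_of_le_of_lt (measure_mono ?_) hn
  intro ω hω
  obtain ⟨u, hu, hge⟩ := hω
  refine ⟨u, hu, ?_⟩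
  have hb := part2 u (hUn n hu)
  have htri := norm_sub_norm_le (thv g (pair (ext hT.le (mhat n ω)) (ext hT.le u)) T)
    (thv g (pair m (ext hT.le u)) T)
  linarith
end
end

section
/- Fix a continuous function u : [0,T] → ℝ^{d−r} and assume g : ℝ^d → ℝ^{d×p} is continuous. Let m̂₀ : [0,T] → ℝ^r be continuous such that, with m̂ = m̂₀, the matrices B̂ and T·I_d − Â B̂⁻¹ Âᵀ are invertible. Then the map m̂ ↦ ∫₀^T ‖x̂(t) − ξ̂ − Ĝ(t)θ̂‖²dt, defined on continuous m̂ : [0,T] → ℝ^r for which the required inverses exist, is continuous at m̂₀ with respect to the supremum norm ‖·‖∞. -/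
open MeasureTheory Filter
open scoped Matrix

attribute [local instance] Matrix.frobeniusSeminormedAddCommGroup
  Matrix.frobeniusNormedAddCommGroup Matrix.frobeniusNormedSpace

noncomputable section

section Aux

open scoped Topology

attribute [local instance] Matrix.frobeniusNormedRing

namespace ODECAux

open ODEC ODECAux
open scoped Topology

variable {ι : Type*} {l : Filter ι}

lemma aux_DCT [l.IsCountablyGenerated] {E : Type*} [NormedAddCommGroup E] [NormedSpace ℝ E]
    {F : ι → ℝ → E} {f : ℝ → E} {a b : ℝ} (C : ℝ)
    (hcont : ∀ m, Continuous (F m))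
    (hbound : ∀ᶠ m in l, ∀ t ∈ Set.uIoc a b, ‖F m t‖ ≤ C)
    (hlim : ∀ t, Filter.Tendsto (fun m => F m t) l (𝓝 (f t))) :
    Filter.Tendsto (fun m => ∫ t in a..b, F m t) l (𝓝 (∫ t in a..b, f t)) := by
  refine intervalIntegral.tendsto_integral_filter_of_dominated_convergence (fun _ => C) ?_ ?_ ?_ ?_
  · exact Filter.Eventually.of_forall fun m => ((hcont m).aestronglyMeasurable).restrict
  · filter_upwards [hbound] with m hm
    exact ae_of_all _ hm
  · exact intervalIntegrable_const
  · exact ae_of_all _ fun t _ => hlim t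

lemma mv_coord {a b : ℕ} (M : Matrix (Fin a) (Fin b) ℝ) (v : EuclideanSpace ℝ (Fin b)) (i : Fin a) :
    mv M v i = ∑ j, M i j * v j := by
  simp [mv, Matrix.toEuclideanLin_apply, Matrix.mulVec, dotProduct]

lemma norm_frob_eq_sqrt {a b : ℕ} (M : Matrix (Fin a) (Fin b) ℝ) :
    ‖M‖ = Real.sqrt (∑ i, ∑ j, ‖M i j‖ ^ 2) := by
  rw [Matrix.frobenius_norm_def, Real.sqrt_eq_rpow]
  congr 1
  refine Finset.sum_congr rfl fun i _ => Finset.sum_congr rfl fun j _ => ?_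
  rw [← Real.rpow_natCast ‖M i j‖ 2]
  norm_num

lemma norm_mv_le {a b : ℕ} (M : Matrix (Fin a) (Fin b) ℝ) (v : EuclideanSpace ℝ (Fin b)) :
    ‖mv M v‖ ≤ ‖M‖ * ‖v‖ := by
  have hv : ‖v‖ = Real.sqrt (∑ j, ‖v j‖ ^ 2) := EuclideanSpace.norm_eq v
  have hmv : ‖mv M v‖ = Real.sqrt (∑ i, ‖mv M v i‖ ^ 2) := EuclideanSpace.norm_eq _
  rw [hmv, hv, norm_frob_eq_sqrt, ← Real.sqrt_mul (by positivity)]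
  apply Real.sqrt_le_sqrt
  rw [Finset.sum_mul]
  apply Finset.sum_le_sum
  intro i _
  rw [mv_coord]
  calc ‖∑ j, M i j * v j‖ ^ 2 = (∑ j, M i j * v j) ^ 2 := by rw [Real.norm_eq_abs, sq_abs]
    _ ≤ (∑ j, (M i j) ^ 2) * (∑ j, (v j) ^ 2) := Finset.sum_mul_sq_le_sq_mul_sq _ _ _
    _ = (∑ j, ‖M i j‖ ^ 2) * (∑ j, ‖v j‖ ^ 2) := by
        simp only [Real.norm_eq_abs, sq_abs]

lemma mv_sub_left {a b : ℕ} (M M' : Matrix (Fin a) (Fin b) ℝ) (v : EuclideanSpace ℝ (Fin b)) :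
    mv (M - M') v = mv M v - mv M' v := by
  simp [mv, map_sub, LinearMap.sub_apply]

lemma mv_sub_right {a b : ℕ} (M : Matrix (Fin a) (Fin b) ℝ) (v v' : EuclideanSpace ℝ (Fin b)) :
    mv M (v - v') = mv M v - mv M v' := map_sub _ _ _

lemma tendsto_mv {a b : ℕ} {M : ι → Matrix (Fin a) (Fin b) ℝ}
    {v : ι → EuclideanSpace ℝ (Fin b)} {M₀ : Matrix (Fin a) (Fin b) ℝ}
    {v₀ : EuclideanSpace ℝ (Fin b)} (hM : Filter.Tendsto M l (𝓝 M₀))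
    (hv : Filter.Tendsto v l (𝓝 v₀)) :
    Filter.Tendsto (fun i => mv (M i) (v i)) l (𝓝 (mv M₀ v₀)) := by
  replace hM := tendsto_iff_norm_sub_tendsto_zero.1 hM
  replace hv := tendsto_iff_norm_sub_tendsto_zero.1 hv
  refine tendsto_iff_norm_sub_tendsto_zero.2 ?_
  have key : ∀ i, ‖mv (M i) (v i) - mv M₀ v₀‖ ≤
      ‖M i - M₀‖ * ‖v i - v₀‖ + ‖M i - M₀‖ * ‖v₀‖ + ‖M₀‖ * ‖v i - v₀‖ := by
    intro i
    have e : mv (M i) (v i) - mv M₀ v₀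
        = mv (M i - M₀) (v i - v₀) + mv (M i - M₀) v₀ + mv M₀ (v i - v₀) := by
      simp only [mv_sub_left, mv_sub_right]; abel
    rw [e]
    refine le_trans (norm_add₃_le) ?_
    exact add_le_add (add_le_add (norm_mv_le _ _) (norm_mv_le _ _)) (norm_mv_le _ _)
  have h0 : Filter.Tendsto (fun i => ‖M i - M₀‖ * ‖v i - v₀‖ + ‖M i - M₀‖ * ‖v₀‖
      + ‖M₀‖ * ‖v i - v₀‖) l (𝓝 0) := by
    have := ((hM.mul hv).add (hM.mul (tendsto_const_nhds (x := ‖v₀‖)))).add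
      ((tendsto_const_nhds (x := ‖M₀‖)).mul hv)
    simpa using this
  exact squeeze_zero (fun i => norm_nonneg _) key h0

lemma tendsto_matmul {a b c : ℕ} {A : ι → Matrix (Fin a) (Fin b) ℝ}
    {B : ι → Matrix (Fin b) (Fin c) ℝ} {A₀ : Matrix (Fin a) (Fin b) ℝ}
    {B₀ : Matrix (Fin b) (Fin c) ℝ}
    (hA : Filter.Tendsto A l (𝓝 A₀)) (hB : Filter.Tendsto B l (𝓝 B₀)) :
    Filter.Tendsto (fun i => A i * B i) l (𝓝 (A₀ * B₀)) := by
  replace hA := tendsto_iff_norm_sub_tendsto_zero.1 hA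
  replace hB := tendsto_iff_norm_sub_tendsto_zero.1 hB
  refine tendsto_iff_norm_sub_tendsto_zero.2 ?_
  have key : ∀ i, ‖A i * B i - A₀ * B₀‖ ≤
      ‖A i - A₀‖ * ‖B i - B₀‖ + ‖A i - A₀‖ * ‖B₀‖ + ‖A₀‖ * ‖B i - B₀‖ := by
    intro i
    have e : A i * B i - A₀ * B₀
        = (A i - A₀) * (B i - B₀) + (A i - A₀) * B₀ + A₀ * (B i - B₀) := by
      simp only [Matrix.sub_mul, Matrix.mul_sub]; abel
    rw [e]
    refine le_trans (norm_add₃_le) ?_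
    exact add_le_add (add_le_add (Matrix.frobenius_norm_mul _ _) (Matrix.frobenius_norm_mul _ _))
      (Matrix.frobenius_norm_mul _ _)
  have h0 : Filter.Tendsto (fun i => ‖A i - A₀‖ * ‖B i - B₀‖ + ‖A i - A₀‖ * ‖B₀‖
      + ‖A₀‖ * ‖B i - B₀‖) l (𝓝 0) := by
    have := ((hA.mul hB).add (hA.mul (tendsto_const_nhds (x := ‖B₀‖)))).add
      ((tendsto_const_nhds (x := ‖A₀‖)).mul hB)
    simpa using this
  exact squeeze_zero (fun i => norm_nonneg _) key h0

lemma tendsto_transpose {a b : ℕ} {A : ι → Matrix (Fin a) (Fin b) ℝ}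
    {A₀ : Matrix (Fin a) (Fin b) ℝ} (hA : Filter.Tendsto A l (𝓝 A₀)) :
    Filter.Tendsto (fun i => (A i)ᵀ) l (𝓝 A₀ᵀ) := by
  replace hA := tendsto_iff_norm_sub_tendsto_zero.1 hA
  refine tendsto_iff_norm_sub_tendsto_zero.2 ?_
  simpa only [← Matrix.transpose_sub, Matrix.frobenius_norm_transpose] using hA

lemma tendsto_inv_matrix {a : ℕ} {A : ι → Matrix (Fin a) (Fin a) ℝ}
    {A₀ : Matrix (Fin a) (Fin a) ℝ} (hA₀ : IsUnit A₀)
    (hA : Filter.Tendsto A l (𝓝 A₀)) :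
    Filter.Tendsto (fun i => (A i)⁻¹) l (𝓝 A₀⁻¹) := by
  haveI : CompleteSpace (Matrix (Fin a) (Fin a) ℝ) := FiniteDimensional.complete ℝ _
  simp only [Matrix.nonsing_inv_eq_ringInverse]
  exact ((NormedRing.inverse_continuousAt hA₀.unit).tendsto).comp hA

lemma pair_castAdd {r q : ℕ} (m : ℝ → EuclideanSpace ℝ (Fin r))
    (u : ℝ → EuclideanSpace ℝ (Fin q)) (t : ℝ) (i : Fin r) :
    pair m u t (Fin.castAdd q i) = m t i := by
  simp [pair, Fin.append_left]

lemma pair_natAdd {r q : ℕ} (m : ℝ → EuclideanSpace ℝ (Fin r))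
    (u : ℝ → EuclideanSpace ℝ (Fin q)) (t : ℝ) (i : Fin q) :
    pair m u t (Fin.natAdd r i) = u t i := by
  simp [pair, Fin.append_right]

lemma pair_sub_norm {r q : ℕ} (m m' : ℝ → EuclideanSpace ℝ (Fin r))
    (u : ℝ → EuclideanSpace ℝ (Fin q)) (t : ℝ) :
    ‖pair m u t - pair m' u t‖ = ‖m t - m' t‖ := by
  rw [EuclideanSpace.norm_eq, EuclideanSpace.norm_eq]
  congr 1
  have key : ∀ i : Fin (r + q), ‖(pair m u t - pair m' u t) i‖ ^ 2
      = Fin.append (fun j : Fin r => ‖m t j - m' t j‖ ^ 2) (fun _ : Fin q => 0) i := by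
    intro i
    induction i using Fin.addCases with
    | left j =>
        rw [Fin.append_left]
        have : (pair m u t - pair m' u t) (Fin.castAdd q j) = m t j - m' t j := by
          simp [pair_castAdd]
        rw [this]
    | right j =>
        rw [Fin.append_right]
        have : (pair m u t - pair m' u t) (Fin.natAdd r j) = 0 := by
          simp [pair_natAdd]
        rw [this]
        simp
  rw [Finset.sum_congr rfl fun i _ => key i, Fin.sum_univ_add]
  simp only [Fin.append_left, Fin.append_right, Finset.sum_const_zero, add_zero]
  refine Finset.sum_congr rfl fun j _ => ?_
  congr 1

lemma cont_ext {T : ℝ} (hT : 0 ≤ T) {E : Type*} [TopologicalSpace E]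
    (f : C(Set.Icc (0:ℝ) T, E)) : Continuous (ext hT f) :=
  f.continuous.comp continuous_projIcc

lemma cont_pair {r q : ℕ} {m : ℝ → EuclideanSpace ℝ (Fin r)}
    {u : ℝ → EuclideanSpace ℝ (Fin q)} (hm : Continuous m) (hu : Continuous u) :
    Continuous (pair m u) := by
  unfold pair
  refine Continuous.comp ?_ ?_
  · exact (EuclideanSpace.equiv (Fin (r + q)) ℝ).symm.continuous
  · refine continuous_pi fun i => ?_
    induction i using Fin.addCases with
    | left j =>
        simp only [Fin.append_left]
        exact (continuous_apply j).comp ((EuclideanSpace.equiv (Fin r) ℝ).continuous.comp hm)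
    | right j =>
        simp only [Fin.append_right]
        exact (continuous_apply j).comp ((EuclideanSpace.equiv (Fin q) ℝ).continuous.comp hu)

lemma pair_ext_proj {T : ℝ} (hT : 0 ≤ T) {r q : ℕ}
    (m : C(Set.Icc (0:ℝ) T, EuclideanSpace ℝ (Fin r)))
    (u : C(Set.Icc (0:ℝ) T, EuclideanSpace ℝ (Fin q))) (t : ℝ) :
    pair (ext hT m) (ext hT u) t
      = pair (ext hT m) (ext hT u) ((Set.projIcc 0 T hT t : Set.Icc (0:ℝ) T) : ℝ) := by
  simp [pair, ext, Set.projIcc_val]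

end ODECAux

end Aux


open ODEC ODECAux
open scoped Topology

set_option maxHeartbeats 1000000

/-- For a fixed continuous `u`, the criterion value
`m̂ ↦ ∫₀ᵀ ‖x̂(t) − ξ̂ − Ĝ(t)θ̂‖² dt`, defined for those continuous `m̂` for which the needed
matrix inverses exist, is continuous at `m̂₀` with respect to the sup norm. -/
theorem stmt9 {r q p : ℕ} (hr : 0 < r) (hq : 0 < q) (hp : 0 < p) {T : ℝ} (hT : 0 < T)
    (g : EuclideanSpace ℝ (Fin (r + q)) → Matrix (Fin (r + q)) (Fin p) ℝ)
    (hg : Continuous g)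
    (u : C(Set.Icc (0:ℝ) T, EuclideanSpace ℝ (Fin q)))
    (mhat₀ : C(Set.Icc (0:ℝ) T, EuclideanSpace ℝ (Fin r)))
    (hinv₀ : IsUnit (Bm g (pair (ext hT.le mhat₀) (ext hT.le u)) T) ∧
      IsUnit (Cm g (pair (ext hT.le mhat₀) (ext hT.le u)) T)) :
    ∀ ε > (0:ℝ), ∃ δ > (0:ℝ),
      ∀ mhat : C(Set.Icc (0:ℝ) T, EuclideanSpace ℝ (Fin r)), dist mhat mhat₀ < δ →
        IsUnit (Bm g (pair (ext hT.le mhat) (ext hT.le u)) T) →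
        IsUnit (Cm g (pair (ext hT.le mhat) (ext hT.le u)) T) →
        |Mf g (pair (ext hT.le mhat) (ext hT.le u)) T
          - Mf g (pair (ext hT.le mhat₀) (ext hT.le u)) T| < ε := by
  classical
  intro ε hε
  set l : Filter C(Set.Icc (0:ℝ) T, EuclideanSpace ℝ (Fin r)) := 𝓝 mhat₀ with hl
  set X : C(Set.Icc (0:ℝ) T, EuclideanSpace ℝ (Fin r)) → ℝ → EuclideanSpace ℝ (Fin (r + q)) :=
    fun m => pair (ext hT.le m) (ext hT.le u) with hXdef
  -- continuity in t
  have hXc : ∀ m, Continuous (X m) := fun m => cont_pair (cont_ext hT.le m) (cont_ext hT.le u)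
  -- distance control
  have hXd : ∀ m t, ‖X m t - X mhat₀ t‖ ≤ dist m mhat₀ := by
    intro m t
    have h1 : ‖X m t - X mhat₀ t‖ = ‖ext hT.le m t - ext hT.le mhat₀ t‖ :=
      pair_sub_norm _ _ _ t
    rw [h1]
    have h2 : ext hT.le m t - ext hT.le mhat₀ t
        = m (Set.projIcc 0 T hT.le t) - mhat₀ (Set.projIcc 0 T hT.le t) := rfl
    rw [h2, ← dist_eq_norm]
    exact ContinuousMap.dist_apply_le_dist _
  -- pointwise convergence
  have hdist0 : Filter.Tendsto (fun m => dist m mhat₀) l (𝓝 0) := by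
    rw [hl]
    simpa using Filter.Tendsto.dist
      (tendsto_id : Filter.Tendsto id (𝓝 mhat₀) (𝓝 mhat₀)) (tendsto_const_nhds (x := mhat₀))
  have hXt : ∀ t, Filter.Tendsto (fun m => X m t) l (𝓝 (X mhat₀ t)) := by
    intro t
    rw [tendsto_iff_norm_sub_tendsto_zero]
    exact squeeze_zero (fun m => norm_nonneg _) (fun m => hXd m t) hdist0
  -- uniform bounds
  obtain ⟨R₀, hR₀⟩ := (isCompact_Icc (a := (0:ℝ)) (b := T)).exists_bound_of_continuousOn
    (hXc mhat₀).continuousOn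
  set R : ℝ := max R₀ 0 with hRdef
  have hRnn : 0 ≤ R := le_max_right _ _
  have hR : ∀ t, ‖X mhat₀ t‖ ≤ R := by
    intro t
    have := pair_ext_proj hT.le mhat₀ u t
    rw [show X mhat₀ t = pair (ext hT.le mhat₀) (ext hT.le u) t from rfl, this]
    exact le_trans (hR₀ _ (Set.projIcc 0 T hT.le t).2) (le_max_left _ _)
  have hXb : ∀ᶠ m in l, ∀ t, ‖X m t‖ ≤ R + 1 := by
    filter_upwards [Metric.ball_mem_nhds mhat₀ one_pos] with m hm t
    have h1 := hXd m t
    have h2 := norm_sub_norm_le (X m t) (X mhat₀ t)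
    have h3 : dist m mhat₀ < 1 := Metric.mem_ball.mp hm
    have h4 := hR t
    linarith
  obtain ⟨Cg₀, hCg₀⟩ := (isCompact_closedBall (0 : EuclideanSpace ℝ (Fin (r + q)))
    (R + 1)).exists_bound_of_continuousOn hg.continuousOn
  set Cg : ℝ := max Cg₀ 0 with hCgdef
  have hCgnn : 0 ≤ Cg := le_max_right _ _
  have hgb : ∀ᶠ m in l, ∀ t, ‖g (X m t)‖ ≤ Cg := by
    filter_upwards [hXb] with m hm t
    exact le_trans (hCg₀ _ (mem_closedBall_zero_iff.mpr (hm t))) (le_max_left _ _)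
  have hgX : ∀ t, Filter.Tendsto (fun m => g (X m t)) l (𝓝 (g (X mhat₀ t))) :=
    fun t => (hg.tendsto _).comp (hXt t)
  -- G
  have hGc : ∀ m, Continuous (fun t => Gm g (X m) t) := fun m =>
    intervalIntegral.continuous_primitive
      (fun a b => (hg.comp (hXc m)).intervalIntegrable a b) 0
  have hGt : ∀ t, Filter.Tendsto (fun m => Gm g (X m) t) l (𝓝 (Gm g (X mhat₀) t)) := by
    intro t
    exact aux_DCT Cg (fun m => hg.comp (hXc m))
      (by filter_upwards [hgb] with m hm; exact fun s _ => hm s) hgX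
  have hGb : ∀ᶠ m in l, ∀ t ∈ Set.uIoc (0:ℝ) T, ‖Gm g (X m) t‖ ≤ Cg * T := by
    filter_upwards [hgb] with m hm t ht
    have h1 : ‖∫ s in (0:ℝ)..t, g (X m s)‖ ≤ Cg * |t - 0| :=
      intervalIntegral.norm_integral_le_of_norm_le_const (fun s _ => hm s)
    have ht' : t ∈ Set.Ioc (0:ℝ) T := by rwa [Set.uIoc_of_le hT.le] at ht
    have h2 : |t - 0| ≤ T := by
      rw [sub_zero, abs_of_pos ht'.1]; exact ht'.2
    calc ‖Gm g (X m) t‖ ≤ Cg * |t - 0| := h1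
      _ ≤ Cg * T := by nlinarith
  -- A
  have hA : Filter.Tendsto (fun m => Am g (X m) T) l (𝓝 (Am g (X mhat₀) T)) :=
    aux_DCT (Cg * T) hGc hGb hGt
  -- B
  have hBc : ∀ m, Continuous (fun t => (Gm g (X m) t)ᵀ * Gm g (X m) t) := by
    intro m
    rw [continuous_iff_continuousAt]
    intro t₀
    exact tendsto_matmul (tendsto_transpose ((hGc m).tendsto t₀)) ((hGc m).tendsto t₀)
  have hBt : ∀ t, Filter.Tendsto (fun m => (Gm g (X m) t)ᵀ * Gm g (X m) t) l
      (𝓝 ((Gm g (X mhat₀) t)ᵀ * Gm g (X mhat₀) t)) :=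
    fun t => tendsto_matmul (tendsto_transpose (hGt t)) (hGt t)
  have hBb : ∀ᶠ m in l, ∀ t ∈ Set.uIoc (0:ℝ) T,
      ‖(Gm g (X m) t)ᵀ * Gm g (X m) t‖ ≤ (Cg * T) * (Cg * T) := by
    filter_upwards [hGb] with m hm t ht
    calc ‖(Gm g (X m) t)ᵀ * Gm g (X m) t‖ ≤ ‖(Gm g (X m) t)ᵀ‖ * ‖Gm g (X m) t‖ :=
          Matrix.frobenius_norm_mul _ _
      _ = ‖Gm g (X m) t‖ * ‖Gm g (X m) t‖ := by rw [Matrix.frobenius_norm_transpose]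
      _ ≤ (Cg * T) * (Cg * T) :=
          mul_le_mul (hm t ht) (hm t ht) (norm_nonneg _) (by positivity)
  have hB : Filter.Tendsto (fun m => Bm g (X m) T) l (𝓝 (Bm g (X mhat₀) T)) :=
    aux_DCT ((Cg * T) * (Cg * T)) hBc hBb hBt
  have hBinv : Filter.Tendsto (fun m => (Bm g (X m) T)⁻¹) l (𝓝 (Bm g (X mhat₀) T)⁻¹) :=
    tendsto_inv_matrix hinv₀.1 hB
  -- C
  have hC : Filter.Tendsto (fun m => Cm g (X m) T) l (𝓝 (Cm g (X mhat₀) T)) := by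
    refine Filter.Tendsto.sub tendsto_const_nhds ?_
    exact tendsto_matmul (tendsto_matmul hA hBinv) (tendsto_transpose hA)
  have hCinv : Filter.Tendsto (fun m => (Cm g (X m) T)⁻¹) l (𝓝 (Cm g (X mhat₀) T)⁻¹) :=
    tendsto_inv_matrix hinv₀.2 hC
  -- eventual norm bounds
  set a1 : ℝ := ‖Am g (X mhat₀) T‖ + 1 with ha1
  set b1 : ℝ := ‖(Bm g (X mhat₀) T)⁻¹‖ + 1 with hb1
  have evA : ∀ᶠ m in l, ‖Am g (X m) T‖ ≤ a1 := by
    filter_upwards [hA.norm.eventually_lt_const (lt_add_one _)] with m hm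
    exact le_of_lt hm
  have evB : ∀ᶠ m in l, ‖(Bm g (X m) T)⁻¹‖ ≤ b1 := by
    filter_upwards [hBinv.norm.eventually_lt_const (lt_add_one _)] with m hm
    exact le_of_lt hm
  have ha1nn : 0 ≤ a1 := by positivity
  have hb1nn : 0 ≤ b1 := by positivity
  -- xi
  set c1 : ℝ := ‖(1 : Matrix (Fin (r + q)) (Fin (r + q)) ℝ)‖ with hc1
  have hIξ : Filter.Tendsto
      (fun m => ∫ t in (0:ℝ)..T,
        mv (1 - Am g (X m) T * (Bm g (X m) T)⁻¹ * (Gm g (X m) t)ᵀ) (X m t)) l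
      (𝓝 (∫ t in (0:ℝ)..T,
        mv (1 - Am g (X mhat₀) T * (Bm g (X mhat₀) T)⁻¹ * (Gm g (X mhat₀) t)ᵀ) (X mhat₀ t))) := by
    refine aux_DCT ((c1 + a1 * b1 * (Cg * T)) * (R + 1)) ?_ ?_ ?_
    · intro m
      rw [continuous_iff_continuousAt]
      intro t₀
      refine tendsto_mv (Filter.Tendsto.sub tendsto_const_nhds ?_) ((hXc m).tendsto t₀)
      exact tendsto_matmul tendsto_const_nhds (tendsto_transpose ((hGc m).tendsto t₀))
    · filter_upwards [hXb, hGb, evA, evB] with m hmX hmG hmA hmB t ht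
      have key : ‖1 - Am g (X m) T * (Bm g (X m) T)⁻¹ * (Gm g (X m) t)ᵀ‖
          ≤ c1 + a1 * b1 * (Cg * T) := by
        refine le_trans (norm_sub_le _ _) ?_
        have h1 : ‖Am g (X m) T * (Bm g (X m) T)⁻¹ * (Gm g (X m) t)ᵀ‖
            ≤ ‖Am g (X m) T‖ * ‖(Bm g (X m) T)⁻¹‖ * ‖Gm g (X m) t‖ := by
          calc ‖Am g (X m) T * (Bm g (X m) T)⁻¹ * (Gm g (X m) t)ᵀ‖
              ≤ ‖Am g (X m) T * (Bm g (X m) T)⁻¹‖ * ‖(Gm g (X m) t)ᵀ‖ :=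
                Matrix.frobenius_norm_mul _ _
            _ ≤ ‖Am g (X m) T‖ * ‖(Bm g (X m) T)⁻¹‖ * ‖(Gm g (X m) t)ᵀ‖ := by
                have := Matrix.frobenius_norm_mul (Am g (X m) T) ((Bm g (X m) T)⁻¹)
                exact mul_le_mul_of_nonneg_right this (norm_nonneg _)
            _ = ‖Am g (X m) T‖ * ‖(Bm g (X m) T)⁻¹‖ * ‖Gm g (X m) t‖ := by
                rw [Matrix.frobenius_norm_transpose]
        have h2 : ‖Am g (X m) T‖ * ‖(Bm g (X m) T)⁻¹‖ * ‖Gm g (X m) t‖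
            ≤ a1 * b1 * (Cg * T) := by
          have hG := hmG t ht
          have hab : 0 ≤ a1 * b1 := by positivity
          exact mul_le_mul (mul_le_mul hmA hmB (norm_nonneg _) ha1nn) hG
            (norm_nonneg _) hab
        linarith
      calc ‖mv (1 - Am g (X m) T * (Bm g (X m) T)⁻¹ * (Gm g (X m) t)ᵀ) (X m t)‖
          ≤ ‖1 - Am g (X m) T * (Bm g (X m) T)⁻¹ * (Gm g (X m) t)ᵀ‖ * ‖X m t‖ :=
            norm_mv_le _ _
        _ ≤ (c1 + a1 * b1 * (Cg * T)) * (R + 1) :=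
            mul_le_mul key (hmX t) (norm_nonneg _) (by positivity)
    · intro t
      refine tendsto_mv (Filter.Tendsto.sub tendsto_const_nhds ?_) (hXt t)
      exact tendsto_matmul (tendsto_matmul hA hBinv) (tendsto_transpose (hGt t))
  have hXi : Filter.Tendsto (fun m => xiv g (X m) T) l (𝓝 (xiv g (X mhat₀) T)) :=
    tendsto_mv hCinv hIξ
  set x1 : ℝ := ‖xiv g (X mhat₀) T‖ + 1 with hx1
  have evXi : ∀ᶠ m in l, ‖xiv g (X m) T‖ ≤ x1 := by
    filter_upwards [hXi.norm.eventually_lt_const (lt_add_one _)] with m hm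
    exact le_of_lt hm
  have hx1nn : 0 ≤ x1 := by positivity
  -- theta
  have hIθ : Filter.Tendsto
      (fun m => ∫ t in (0:ℝ)..T, mv (Gm g (X m) t)ᵀ (X m t - xiv g (X m) T)) l
      (𝓝 (∫ t in (0:ℝ)..T, mv (Gm g (X mhat₀) t)ᵀ (X mhat₀ t - xiv g (X mhat₀) T))) := by
    refine aux_DCT ((Cg * T) * ((R + 1) + x1)) ?_ ?_ ?_
    · intro m
      rw [continuous_iff_continuousAt]
      intro t₀
      exact tendsto_mv (tendsto_transpose ((hGc m).tendsto t₀))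
        (Filter.Tendsto.sub ((hXc m).tendsto t₀) tendsto_const_nhds)
    · filter_upwards [hXb, hGb, evXi] with m hmX hmG hmXi t ht
      have h1 : ‖X m t - xiv g (X m) T‖ ≤ (R + 1) + x1 :=
        le_trans (norm_sub_le _ _) (add_le_add (hmX t) hmXi)
      calc ‖mv (Gm g (X m) t)ᵀ (X m t - xiv g (X m) T)‖
          ≤ ‖(Gm g (X m) t)ᵀ‖ * ‖X m t - xiv g (X m) T‖ := norm_mv_le _ _
        _ = ‖Gm g (X m) t‖ * ‖X m t - xiv g (X m) T‖ := by
            rw [Matrix.frobenius_norm_transpose]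
        _ ≤ (Cg * T) * ((R + 1) + x1) :=
            mul_le_mul (hmG t ht) h1 (norm_nonneg _) (by positivity)
    · intro t
      exact tendsto_mv (tendsto_transpose (hGt t)) (Filter.Tendsto.sub (hXt t) hXi)
  have hTh : Filter.Tendsto (fun m => thv g (X m) T) l (𝓝 (thv g (X mhat₀) T)) :=
    tendsto_mv hBinv hIθ
  set th1 : ℝ := ‖thv g (X mhat₀) T‖ + 1 with hth1
  have evTh : ∀ᶠ m in l, ‖thv g (X m) T‖ ≤ th1 := by
    filter_upwards [hTh.norm.eventually_lt_const (lt_add_one _)] with m hm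
    exact le_of_lt hm
  have hth1nn : 0 ≤ th1 := by positivity
  -- Mf
  set D : ℝ := (R + 1) + x1 + (Cg * T) * th1 with hD
  have hDnn : 0 ≤ D := by positivity
  have hMf : Filter.Tendsto (fun m => Mf g (X m) T) l (𝓝 (Mf g (X mhat₀) T)) := by
    refine aux_DCT (D ^ 2) ?_ ?_ ?_
    · intro m
      have hmvF : Continuous (fun t => X m t - xiv g (X m) T - mv (Gm g (X m) t)
          (thv g (X m) T)) := by
        refine Continuous.sub (Continuous.sub (hXc m) continuous_const) ?_
        rw [continuous_iff_continuousAt]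
        intro t₀
        exact tendsto_mv ((hGc m).tendsto t₀) tendsto_const_nhds
      exact (hmvF.norm).pow 2
    · filter_upwards [hXb, hGb, evXi, evTh] with m hmX hmG hmXi hmTh t ht
      have h1 : ‖X m t - xiv g (X m) T - mv (Gm g (X m) t) (thv g (X m) T)‖ ≤ D := by
        refine le_trans (norm_sub_le _ _) ?_
        have h2 : ‖X m t - xiv g (X m) T‖ ≤ (R + 1) + x1 :=
          le_trans (norm_sub_le _ _) (add_le_add (hmX t) hmXi)
        have h3 : ‖mv (Gm g (X m) t) (thv g (X m) T)‖ ≤ (Cg * T) * th1 :=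
          le_trans (norm_mv_le _ _)
            (mul_le_mul (hmG t ht) hmTh (norm_nonneg _) (by positivity))
        rw [hD]
        linarith
      have h0 : (0:ℝ) ≤ ‖X m t - xiv g (X m) T - mv (Gm g (X m) t) (thv g (X m) T)‖ ^ 2 := by
        positivity
      rw [Real.norm_of_nonneg h0]
      exact pow_le_pow_left₀ (norm_nonneg _) h1 2
    · intro t
      have h := Filter.Tendsto.sub (Filter.Tendsto.sub (hXt t) hXi)
        (tendsto_mv (hGt t) hTh)
      exact (h.norm).pow 2
  -- conclusion
  have := (Metric.tendsto_nhds.mp hMf) ε hε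
  rw [Metric.eventually_nhds_iff] at this
  obtain ⟨δ, hδ, hball⟩ := this
  refine ⟨δ, hδ, fun mhat hm _ _ => ?_⟩
  have := hball hm
  rwa [Real.dist_eq] at this
end
end

section
/- Assume: (a) g : ℝ^d → ℝ^{d×p} is continuous; (b) for every (θ',ξ') ∈ ℝ^p × ℝ^d there is at most one continuous solution on [0,T] of the integral equation x(t) = ξ' + (∫₀^t g(x(s))ds)·θ', and for the true pair (θ,ξ) the solution x(·) exists with measured part m and unmeasured part u*; (c) identifiability: if the measured parts of two solutions x(·;θ',ξ') and x(·;θ'',ξ'') coincide on [0,T] then (θ',ξ')=(θ'',ξ''); (d) U ⊂ C([0,T],ℝ^{d−r}) is compact under ‖·‖∞ with u* ∈ U, and for each u ∈ U the matrices B_u and T·I_d − A_u B_u⁻¹ A_uᵀ are invertible. Then M(u*) = 0, u* is the unique minimizer of M on U, and for every ε > 0, M(u*) < inf { M(u) : u ∈ U, ‖u − u*‖∞ ≥ ε }. -/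
open MeasureTheory Filter
open scoped Matrix

attribute [local instance] Matrix.frobeniusSeminormedAddCommGroup
  Matrix.frobeniusNormedAddCommGroup Matrix.frobeniusNormedSpace

noncomputable section

open ODEC

instance matENormedAddMonoid {a b : ℕ} : ENormedAddMonoid (Matrix (Fin a) (Fin b) ℝ) :=
  NormedAddGroup.toENormedAddMonoid

section Aux
namespace ODEC

variable {a b c n p q r : ℕ}

theorem mv_def (A : Matrix (Fin a) (Fin b) ℝ) (v : EuclideanSpace ℝ (Fin b)) :
    mv A v = (WithLp.equiv 2 (Fin a → ℝ)).symm (A.mulVec (WithLp.equiv 2 (Fin b → ℝ) v)) := rfl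

theorem mv_vec_add (A : Matrix (Fin a) (Fin b) ℝ) (v w : EuclideanSpace ℝ (Fin b)) :
    mv A (v + w) = mv A v + mv A w := map_add (Matrix.toEuclideanLin A) v w

theorem mv_vec_sub (A : Matrix (Fin a) (Fin b) ℝ) (v w : EuclideanSpace ℝ (Fin b)) :
    mv A (v - w) = mv A v - mv A w := map_sub (Matrix.toEuclideanLin A) v w

theorem mv_mat_add (A B : Matrix (Fin a) (Fin b) ℝ) (v : EuclideanSpace ℝ (Fin b)) :
    mv (A + B) v = mv A v + mv B v := by
  show Matrix.toEuclideanLin (A + B) v = _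
  rw [map_add]; rfl

theorem mv_mat_sub (A B : Matrix (Fin a) (Fin b) ℝ) (v : EuclideanSpace ℝ (Fin b)) :
    mv (A - B) v = mv A v - mv B v := by
  show Matrix.toEuclideanLin (A - B) v = _
  rw [map_sub]; rfl

theorem mv_mat_smul (t : ℝ) (A : Matrix (Fin a) (Fin b) ℝ) (v : EuclideanSpace ℝ (Fin b)) :
    mv (t • A) v = t • mv A v := by
  show Matrix.toEuclideanLin (t • A) v = _
  rw [_root_.map_smul]; rfl

theorem mv_mv (A : Matrix (Fin a) (Fin b) ℝ) (B : Matrix (Fin b) (Fin c) ℝ)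
    (v : EuclideanSpace ℝ (Fin c)) : mv A (mv B v) = mv (A * B) v := by
  simp [mv_def, Matrix.mulVec_mulVec]

theorem mv_one (v : EuclideanSpace ℝ (Fin a)) : mv 1 v = v := by
  simp [mv_def, Matrix.one_mulVec]

theorem continuous_mv : Continuous fun pr :
    Matrix (Fin a) (Fin b) ℝ × EuclideanSpace ℝ (Fin b) => mv pr.1 pr.2 := by
  simp only [mv_def]
  apply Continuous.comp (PiLp.continuous_toLp _ _)
  apply continuous_pi
  intro i
  simp only [Matrix.mulVec, dotProduct]
  apply continuous_finset_sum
  intro j _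
  exact ((continuous_apply_apply i j).comp continuous_fst).mul
    (((continuous_apply j).comp (PiLp.continuous_ofLp _ _)).comp continuous_snd)

theorem Continuous.mv_comp {X : Type*} [TopologicalSpace X]
    {f : X → Matrix (Fin a) (Fin b) ℝ} {v : X → EuclideanSpace ℝ (Fin b)}
    (hf : Continuous f) (hv : Continuous v) : Continuous fun z => mv (f z) (v z) := by
  simp only [mv_def]
  exact Continuous.comp (PiLp.continuous_toLp _ _)
    (hf.matrix_mulVec (Continuous.comp (PiLp.continuous_ofLp _ _) hv))

/-- `H ↦ mv H v` as a continuous linear map. -/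
def mvApplyCLM (v : EuclideanSpace ℝ (Fin b)) :
    Matrix (Fin a) (Fin b) ℝ →L[ℝ] EuclideanSpace ℝ (Fin a) :=
  LinearMap.toContinuousLinearMap
    { toFun := fun H => mv H v
      map_add' := fun H K => mv_mat_add H K v
      map_smul' := fun t H => mv_mat_smul t H v }

@[simp] theorem mvApplyCLM_apply (v : EuclideanSpace ℝ (Fin b)) (H : Matrix (Fin a) (Fin b) ℝ) :
    mvApplyCLM v H = mv H v := rfl

/-- `H ↦ mv (N * Hᵀ) v` as a continuous linear map. -/
def mulTransCLM (N : Matrix (Fin a) (Fin b) ℝ) (v : EuclideanSpace ℝ (Fin c)) :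
    Matrix (Fin c) (Fin b) ℝ →L[ℝ] EuclideanSpace ℝ (Fin a) :=
  LinearMap.toContinuousLinearMap
    { toFun := fun H => mv (N * Hᵀ) v
      map_add' := fun H K => by
        show mv (N * (H + K)ᵀ) v = mv (N * Hᵀ) v + mv (N * Kᵀ) v
        rw [Matrix.transpose_add, Matrix.mul_add, mv_mat_add]
      map_smul' := fun t H => by
        show mv (N * (t • H)ᵀ) v = t • mv (N * Hᵀ) v
        rw [Matrix.transpose_smul, Matrix.mul_smul, mv_mat_smul] }

@[simp] theorem mulTransCLM_apply (N : Matrix (Fin a) (Fin b) ℝ) (v : EuclideanSpace ℝ (Fin c))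
    (H : Matrix (Fin c) (Fin b) ℝ) : mulTransCLM N v H = mv (N * Hᵀ) v := rfl

/-- `H ↦ mv (N * H) v` as a continuous linear map. -/
def mulApplyCLM (N : Matrix (Fin a) (Fin b) ℝ) (v : EuclideanSpace ℝ (Fin c)) :
    Matrix (Fin b) (Fin c) ℝ →L[ℝ] EuclideanSpace ℝ (Fin a) :=
  LinearMap.toContinuousLinearMap
    { toFun := fun H => mv (N * H) v
      map_add' := fun H K => by
        show mv (N * (H + K)) v = mv (N * H) v + mv (N * K) v
        rw [Matrix.mul_add, mv_mat_add]
      map_smul' := fun t H => by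
        show mv (N * (t • H)) v = t • mv (N * H) v
        rw [Matrix.mul_smul, mv_mat_smul] }

@[simp] theorem mulApplyCLM_apply (N : Matrix (Fin a) (Fin b) ℝ) (v : EuclideanSpace ℝ (Fin c))
    (H : Matrix (Fin b) (Fin c) ℝ) : mulApplyCLM N v H = mv (N * H) v := rfl

theorem integral_mv_apply {f : ℝ → Matrix (Fin a) (Fin b) ℝ} {v : EuclideanSpace ℝ (Fin b)}
    {t₀ t₁ : ℝ} (hf : IntervalIntegrable f MeasureTheory.volume t₀ t₁) :
    ∫ t in t₀..t₁, mv (f t) v = mv (∫ t in t₀..t₁, f t) v := by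
  exact (mvApplyCLM (a := a) v).intervalIntegral_comp_comm hf

theorem integral_mulTrans {f : ℝ → Matrix (Fin c) (Fin b) ℝ} {N : Matrix (Fin a) (Fin b) ℝ}
    {v : EuclideanSpace ℝ (Fin c)} {t₀ t₁ : ℝ}
    (hf : IntervalIntegrable f MeasureTheory.volume t₀ t₁) :
    ∫ t in t₀..t₁, mv (N * (f t)ᵀ) v = mv (N * (∫ t in t₀..t₁, f t)ᵀ) v := by
  exact (mulTransCLM N v).intervalIntegral_comp_comm hf

theorem integral_mulApply {f : ℝ → Matrix (Fin b) (Fin c) ℝ} {N : Matrix (Fin a) (Fin b) ℝ}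
    {v : EuclideanSpace ℝ (Fin c)} {t₀ t₁ : ℝ}
    (hf : IntervalIntegrable f MeasureTheory.volume t₀ t₁) :
    ∫ t in t₀..t₁, mv (N * f t) v = mv (N * ∫ t in t₀..t₁, f t) v := by
  exact (mulApplyCLM N v).intervalIntegral_comp_comm hf

end ODEC
end Aux

section Aux2
namespace ODEC
open MeasureTheory intervalIntegral

variable {a b c n p q r : ℕ}

/-- a continuous nonnegative function with zero integral vanishes on `[0,T]`. -/
theorem eq_zero_of_integral_eq_zero {T : ℝ} (hT : 0 < T) {f : ℝ → ℝ} (hf : Continuous f)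
    (hnn : ∀ t, 0 ≤ f t) (hint : ∫ t in (0:ℝ)..T, f t = 0) :
    ∀ t ∈ Set.Icc (0:ℝ) T, f t = 0 := by
  by_contra hcon
  push_neg at hcon
  obtain ⟨t₀, ht₀, hne⟩ := hcon
  have hpos : 0 < f t₀ := (hnn t₀).lt_of_ne (Ne.symm hne)
  have hev : ∀ᶠ s in nhds t₀, 0 < f s :=
    (hf.continuousAt (x := t₀)).eventually (eventually_gt_nhds hpos)
  obtain ⟨δ, hδ, hball⟩ := Metric.eventually_nhds_iff.mp hev
  set A := max 0 (t₀ - δ) with hA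
  set B := min T (t₀ + δ) with hB
  have hAB : A < B :=
    max_lt (lt_min hT (by linarith [ht₀.1])) (lt_min (by linarith [ht₀.2]) (by linarith))
  have hsub : Set.Ioo A B ⊆ Function.support f ∩ Set.Ioc 0 T := by
    intro s hs
    have h1 : 0 < s := lt_of_le_of_lt (le_max_left 0 (t₀ - δ)) hs.1
    have h2 : s ≤ T := le_of_lt (lt_of_lt_of_le hs.2 (min_le_left T (t₀ + δ)))
    have h3 : t₀ - δ < s := lt_of_le_of_lt (le_max_right 0 (t₀ - δ)) hs.1
    have h4 : s < t₀ + δ := lt_of_lt_of_le hs.2 (min_le_right T (t₀ + δ))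
    refine ⟨ne_of_gt (hball ?_), h1, h2⟩
    rw [Real.dist_eq, abs_lt]
    constructor <;> linarith
  have hnnae : 0 ≤ᵐ[volume] f := Filter.Eventually.of_forall hnn
  have hiff := integral_pos_iff_support_of_nonneg_ae hnnae (hf.intervalIntegrable 0 T)
  have hnpos : ¬(0 < ∫ t in (0:ℝ)..T, f t) := by rw [hint]; exact lt_irrefl 0
  rw [hiff] at hnpos
  push_neg at hnpos
  have h0 := hnpos hT
  have hmono := measure_mono (μ := (volume : MeasureTheory.Measure ℝ)) hsub
  rw [le_antisymm h0 zero_le] at hmono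
  simp only [Real.volume_Ioo, nonpos_iff_eq_zero, ENNReal.ofReal_eq_zero] at hmono
  linarith

theorem continuous_Gm {g : EuclideanSpace ℝ (Fin n) → Matrix (Fin n) (Fin p) ℝ}
    (hg : Continuous g) {y : ℝ → EuclideanSpace ℝ (Fin n)} (hy : Continuous y) :
    Continuous (Gm g y) :=
  intervalIntegral.continuous_primitive (fun _ _ => ((hg.comp hy).intervalIntegrable _ _)) 0

/- congruence lemmas: all the functionals only depend on values on `[0,T]`. -/

theorem Gm_congr {g : EuclideanSpace ℝ (Fin n) → Matrix (Fin n) (Fin p) ℝ}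
    {x₁ x₂ : ℝ → EuclideanSpace ℝ (Fin n)} {T : ℝ}
    (h : Set.EqOn x₁ x₂ (Set.Icc 0 T)) :
    ∀ t ∈ Set.Icc (0:ℝ) T, Gm g x₁ t = Gm g x₂ t := by
  intro t ht
  apply intervalIntegral.integral_congr
  intro s hs
  rw [Set.uIcc_of_le ht.1] at hs
  exact congrArg g (h ⟨hs.1, le_trans hs.2 ht.2⟩)

theorem Am_congr {g : EuclideanSpace ℝ (Fin n) → Matrix (Fin n) (Fin p) ℝ}
    {x₁ x₂ : ℝ → EuclideanSpace ℝ (Fin n)} {T : ℝ} (hT : 0 ≤ T)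
    (h : Set.EqOn x₁ x₂ (Set.Icc 0 T)) : Am g x₁ T = Am g x₂ T := by
  apply intervalIntegral.integral_congr
  intro t ht
  rw [Set.uIcc_of_le hT] at ht
  exact Gm_congr h t ht

theorem Bm_congr {g : EuclideanSpace ℝ (Fin n) → Matrix (Fin n) (Fin p) ℝ}
    {x₁ x₂ : ℝ → EuclideanSpace ℝ (Fin n)} {T : ℝ} (hT : 0 ≤ T)
    (h : Set.EqOn x₁ x₂ (Set.Icc 0 T)) : Bm g x₁ T = Bm g x₂ T := by
  apply intervalIntegral.integral_congr
  intro t ht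
  rw [Set.uIcc_of_le hT] at ht
  show (Gm g x₁ t)ᵀ * Gm g x₁ t = (Gm g x₂ t)ᵀ * Gm g x₂ t
  rw [Gm_congr h t ht]

theorem Cm_congr {g : EuclideanSpace ℝ (Fin n) → Matrix (Fin n) (Fin p) ℝ}
    {x₁ x₂ : ℝ → EuclideanSpace ℝ (Fin n)} {T : ℝ} (hT : 0 ≤ T)
    (h : Set.EqOn x₁ x₂ (Set.Icc 0 T)) : Cm g x₁ T = Cm g x₂ T := by
  unfold Cm
  rw [Am_congr hT h, Bm_congr hT h]

theorem xiv_congr {g : EuclideanSpace ℝ (Fin n) → Matrix (Fin n) (Fin p) ℝ}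
    {x₁ x₂ : ℝ → EuclideanSpace ℝ (Fin n)} {T : ℝ} (hT : 0 ≤ T)
    (h : Set.EqOn x₁ x₂ (Set.Icc 0 T)) : xiv g x₁ T = xiv g x₂ T := by
  unfold xiv
  rw [Cm_congr hT h]
  refine congrArg _ ?_
  apply intervalIntegral.integral_congr
  intro t ht
  rw [Set.uIcc_of_le hT] at ht
  show mv (1 - Am g x₁ T * (Bm g x₁ T)⁻¹ * (Gm g x₁ t)ᵀ) (x₁ t) = _
  rw [Am_congr hT h, Bm_congr hT h, Gm_congr h t ht, h ht]

theorem thv_congr {g : EuclideanSpace ℝ (Fin n) → Matrix (Fin n) (Fin p) ℝ}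
    {x₁ x₂ : ℝ → EuclideanSpace ℝ (Fin n)} {T : ℝ} (hT : 0 ≤ T)
    (h : Set.EqOn x₁ x₂ (Set.Icc 0 T)) : thv g x₁ T = thv g x₂ T := by
  unfold thv
  rw [Bm_congr hT h]
  refine congrArg _ ?_
  apply intervalIntegral.integral_congr
  intro t ht
  rw [Set.uIcc_of_le hT] at ht
  show mv (Gm g x₁ t)ᵀ (x₁ t - xiv g x₁ T) = _
  rw [Gm_congr h t ht, h ht, xiv_congr hT h]

theorem Mf_congr {g : EuclideanSpace ℝ (Fin n) → Matrix (Fin n) (Fin p) ℝ}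
    {x₁ x₂ : ℝ → EuclideanSpace ℝ (Fin n)} {T : ℝ} (hT : 0 ≤ T)
    (h : Set.EqOn x₁ x₂ (Set.Icc 0 T)) : Mf g x₁ T = Mf g x₂ T := by
  unfold Mf
  apply intervalIntegral.integral_congr
  intro t ht
  rw [Set.uIcc_of_le hT] at ht
  show ‖x₁ t - xiv g x₁ T - mv (Gm g x₁ t) (thv g x₁ T)‖ ^ 2 = _
  rw [Gm_congr h t ht, h ht, xiv_congr hT h, thv_congr hT h]

/- pair lemmas -/

theorem measPart_pair (m : ℝ → EuclideanSpace ℝ (Fin r)) (u : ℝ → EuclideanSpace ℝ (Fin q)) :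
    measPart (pair m u) = m := by
  funext t
  ext i
  simp [measPart, pair, Fin.append_left]

theorem unmeasPart_pair (m : ℝ → EuclideanSpace ℝ (Fin r)) (u : ℝ → EuclideanSpace ℝ (Fin q)) :
    unmeasPart (pair m u) = u := by
  funext t
  ext i
  simp [unmeasPart, pair, Fin.append_right]

theorem pair_measPart_unmeasPart (x : ℝ → EuclideanSpace ℝ (Fin (r + q))) :
    pair (measPart x) (unmeasPart x) = x := by
  funext t
  ext i
  show Fin.append _ _ i = x t i
  refine Fin.addCases (fun j => ?_) (fun j => ?_) i
  · rw [Fin.append_left]; rfl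
  · rw [Fin.append_right]; rfl

theorem continuous_pair {X : Type*} [TopologicalSpace X]
    {m : X → EuclideanSpace ℝ (Fin r)} {u : X → EuclideanSpace ℝ (Fin q)}
    (hm : Continuous m) (hu : Continuous u) :
    Continuous fun z => (EuclideanSpace.equiv (Fin (r + q)) ℝ).symm
      (Fin.append (EuclideanSpace.equiv (Fin r) ℝ (m z)) (EuclideanSpace.equiv (Fin q) ℝ (u z))) := by
  apply Continuous.comp (EuclideanSpace.equiv (Fin (r + q)) ℝ).symm.continuous
  apply continuous_pi
  intro i
  refine Fin.addCases (fun j => ?_) (fun j => ?_) i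
  · simp only [Fin.append_left]
    exact (continuous_apply j).comp ((EuclideanSpace.equiv (Fin r) ℝ).continuous.comp hm)
  · simp only [Fin.append_right]
    exact (continuous_apply j).comp ((EuclideanSpace.equiv (Fin q) ℝ).continuous.comp hu)

end ODEC
end Aux2

section Aux3
namespace ODEC
open MeasureTheory intervalIntegral

variable {n p : ℕ}

theorem true_sol_eval {g : EuclideanSpace ℝ (Fin n) → Matrix (Fin n) (Fin p) ℝ}
    (hg : Continuous g) {T : ℝ} (hT : 0 < T)
    {θ : EuclideanSpace ℝ (Fin p)} {ξ : EuclideanSpace ℝ (Fin n)}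
    {y : ℝ → EuclideanSpace ℝ (Fin n)} (hy : Continuous y)
    (hsol : ∀ t ∈ Set.Icc (0:ℝ) T, y t = ξ + mv (Gm g y t) θ)
    (hB : IsUnit (Bm g y T)) (hC : IsUnit (Cm g y T)) :
    xiv g y T = ξ ∧ thv g y T = θ ∧ Mf g y T = 0 := by
  have hGc : Continuous (Gm g y) := continuous_Gm hg hy
  have hBdet : IsUnit (Bm g y T).det := (Matrix.isUnit_iff_isUnit_det _).mp hB
  have hCdet : IsUnit (Cm g y T).det := (Matrix.isUnit_iff_isUnit_det _).mp hC
  have hGint : IntervalIntegrable (Gm g y) volume 0 T := hGc.intervalIntegrable 0 T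
  have hGGc : Continuous (fun t => (Gm g y t)ᵀ * Gm g y t) := hGc.matrix_transpose.matrix_mul hGc
  have hGGint : IntervalIntegrable (fun t => (Gm g y t)ᵀ * Gm g y t) volume 0 T :=
    hGGc.intervalIntegrable 0 T
  have hAmdef : (∫ t in (0:ℝ)..T, Gm g y t) = Am g y T := rfl
  have hBmdef : (∫ t in (0:ℝ)..T, (Gm g y t)ᵀ * Gm g y t) = Bm g y T := rfl
  set A := Am g y T with hA
  set Bi := (Bm g y T)⁻¹ with hBi
  -- the key integral identity
  have key : (∫ t in (0:ℝ)..T, mv (1 - A * Bi * (Gm g y t)ᵀ) (y t)) = mv (Cm g y T) ξ := by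
    have hcongr : Set.EqOn (fun t => mv (1 - A * Bi * (Gm g y t)ᵀ) (y t))
        (fun t => (ξ + mv (Gm g y t) θ) -
          (mv (A * Bi * (Gm g y t)ᵀ) ξ + mv (A * Bi * ((Gm g y t)ᵀ * Gm g y t)) θ))
        (Set.uIcc 0 T) := by
      intro t ht
      rw [Set.uIcc_of_le hT.le] at ht
      show mv (1 - A * Bi * (Gm g y t)ᵀ) (y t) = _
      rw [mv_mat_sub, hsol t ht, mv_one]
      congr 1
      rw [mv_vec_add, mv_mv, Matrix.mul_assoc (A * Bi)]
    rw [intervalIntegral.integral_congr hcongr]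
    have i1a : IntervalIntegrable (fun _ : ℝ => ξ) volume 0 T := intervalIntegrable_const
    have i1b : IntervalIntegrable (fun t => mv (Gm g y t) θ) volume 0 T :=
      (Continuous.mv_comp hGc continuous_const).intervalIntegrable 0 T
    have i2 : IntervalIntegrable (fun t => mv (A * Bi * (Gm g y t)ᵀ) ξ) volume 0 T :=
      (Continuous.mv_comp (continuous_const.matrix_mul hGc.matrix_transpose)
        continuous_const).intervalIntegrable 0 T
    have i3 : IntervalIntegrable (fun t => mv (A * Bi * ((Gm g y t)ᵀ * Gm g y t)) θ)
        volume 0 T :=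
      (Continuous.mv_comp (continuous_const.matrix_mul hGGc)
        continuous_const).intervalIntegrable 0 T
    rw [intervalIntegral.integral_sub (i1a.add i1b) (i2.add i3),
      intervalIntegral.integral_add i1a i1b, intervalIntegral.integral_add i2 i3,
      intervalIntegral.integral_const, integral_mv_apply hGint,
      integral_mulTrans hGint, integral_mulApply hGGint, hAmdef, hBmdef]
    have hABB : A * Bi * Bm g y T = A := by
      rw [Matrix.mul_assoc, hBi, Matrix.nonsing_inv_mul _ hBdet, Matrix.mul_one]
    rw [hABB, add_sub_add_right_eq_sub]
    show (T - 0) • ξ - mv (A * Bi * Aᵀ) ξ = mv (Cm g y T) ξ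
    have : Cm g y T = T • (1 : Matrix (Fin n) (Fin n) ℝ) - A * Bi * Aᵀ := rfl
    rw [this, mv_mat_sub, mv_mat_smul, mv_one, sub_zero]
  have hxiv : xiv g y T = ξ := by
    show mv (Cm g y T)⁻¹ (∫ t in (0:ℝ)..T, mv (1 - A * Bi * (Gm g y t)ᵀ) (y t)) = ξ
    rw [key, mv_mv, Matrix.nonsing_inv_mul _ hCdet, mv_one]
  have hthv : thv g y T = θ := by
    show mv Bi (∫ t in (0:ℝ)..T, mv (Gm g y t)ᵀ (y t - xiv g y T)) = θ
    rw [hxiv]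
    have hcongr : Set.EqOn (fun t => mv (Gm g y t)ᵀ (y t - ξ))
        (fun t => mv ((Gm g y t)ᵀ * Gm g y t) θ) (Set.uIcc 0 T) := by
      intro t ht
      rw [Set.uIcc_of_le hT.le] at ht
      show mv (Gm g y t)ᵀ (y t - ξ) = _
      rw [hsol t ht, add_sub_cancel_left, mv_mv]
    rw [intervalIntegral.integral_congr hcongr, integral_mv_apply hGGint, hBmdef,
      mv_mv, hBi, Matrix.nonsing_inv_mul _ hBdet, mv_one]
  refine ⟨hxiv, hthv, ?_⟩
  show (∫ t in (0:ℝ)..T, ‖y t - xiv g y T - mv (Gm g y t) (thv g y T)‖ ^ 2) = 0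
  rw [hxiv, hthv]
  have hcongr : Set.EqOn (fun t => ‖y t - ξ - mv (Gm g y t) θ‖ ^ 2) (fun _ => (0:ℝ))
      (Set.uIcc 0 T) := by
    intro t ht
    rw [Set.uIcc_of_le hT.le] at ht
    show ‖y t - ξ - mv (Gm g y t) θ‖ ^ 2 = 0
    rw [hsol t ht, add_sub_cancel_left, sub_self, norm_zero]
    norm_num
  rw [intervalIntegral.integral_congr hcongr]
  simp

theorem Mf_nonneg {g : EuclideanSpace ℝ (Fin n) → Matrix (Fin n) (Fin p) ℝ}
    {T : ℝ} (hT : 0 ≤ T) (y : ℝ → EuclideanSpace ℝ (Fin n)) : 0 ≤ Mf g y T :=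
  intervalIntegral.integral_nonneg hT (fun _ _ => sq_nonneg _)

theorem isSol_of_Mf_eq_zero {g : EuclideanSpace ℝ (Fin n) → Matrix (Fin n) (Fin p) ℝ}
    (hg : Continuous g) {T : ℝ} (hT : 0 < T)
    {y : ℝ → EuclideanSpace ℝ (Fin n)} (hy : Continuous y) (h0 : Mf g y T = 0) :
    ∀ t ∈ Set.Icc (0:ℝ) T, y t = xiv g y T + mv (Gm g y t) (thv g y T) := by
  have hGc : Continuous (Gm g y) := continuous_Gm hg hy
  have hfc : Continuous fun t => ‖y t - xiv g y T - mv (Gm g y t) (thv g y T)‖ ^ 2 :=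
    (((hy.sub continuous_const).sub
      (Continuous.mv_comp hGc continuous_const)).norm.pow 2)
  have hz := eq_zero_of_integral_eq_zero hT hfc (fun _ => sq_nonneg _) h0
  intro t ht
  have h2 := hz t ht
  have h3 : y t - xiv g y T - mv (Gm g y t) (thv g y T) = 0 := by
    have := pow_eq_zero_iff (n := 2) (by norm_num) |>.mp h2
    exact norm_eq_zero.mp this
  have h4 : y t - xiv g y T = mv (Gm g y t) (thv g y T) := sub_eq_zero.mp h3
  rw [← h4]
  abel

end ODEC
end Aux3

section Aux4
namespace ODEC
open MeasureTheory intervalIntegral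

variable {n p : ℕ}

set_option maxHeartbeats 2000000 in
theorem continuous_Mf_param {g : EuclideanSpace ℝ (Fin n) → Matrix (Fin n) (Fin p) ℝ}
    (hg : Continuous g) {T : ℝ} (hT : 0 < T) {X : Type*} [TopologicalSpace X]
    {y : X → ℝ → EuclideanSpace ℝ (Fin n)} (hy : Continuous fun z : X × ℝ => y z.1 z.2)
    (hB : ∀ u, IsUnit (Bm g (y u) T)) (hC : ∀ u, IsUnit (Cm g (y u) T)) :
    Continuous fun u => Mf g (y u) T := by
  have hGm : Continuous fun z : X × ℝ => Gm g (y z.1) z.2 := by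
    show Continuous fun z : X × ℝ => ∫ s in (0:ℝ)..z.2, g (y z.1 s)
    have h1 : Continuous (Function.uncurry fun (z : X × ℝ) (s : ℝ) => g (y z.1 s)) :=
      hg.comp (hy.comp ((continuous_fst.comp continuous_fst).prodMk continuous_snd))
    exact intervalIntegral.continuous_parametric_intervalIntegral_of_continuous
      (μ := volume) (f := fun (z : X × ℝ) s => g (y z.1 s)) h1 continuous_snd
  have hAc : Continuous fun u : X => Am g (y u) T := by
    show Continuous fun u : X => ∫ t in (0:ℝ)..T, Gm g (y u) t
    exact intervalIntegral.continuous_parametric_intervalIntegral_of_continuous'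
      (μ := volume) (f := fun (u : X) t => Gm g (y u) t) hGm 0 T
  have hBc : Continuous fun u : X => Bm g (y u) T := by
    show Continuous fun u : X => ∫ t in (0:ℝ)..T, (Gm g (y u) t)ᵀ * Gm g (y u) t
    exact intervalIntegral.continuous_parametric_intervalIntegral_of_continuous'
      (μ := volume) (f := fun (u : X) t => (Gm g (y u) t)ᵀ * Gm g (y u) t)
      (hGm.matrix_transpose.matrix_mul hGm) 0 T
  have hBne : ∀ u, (Bm g (y u) T).det ≠ 0 :=
    fun u => ((Matrix.isUnit_iff_isUnit_det _).mp (hB u)).ne_zero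
  have hBinv : Continuous fun u : X => (Bm g (y u) T)⁻¹ := by
    have heq : (fun u : X => (Bm g (y u) T)⁻¹)
        = fun u => ((Bm g (y u) T).det)⁻¹ • (Bm g (y u) T).adjugate := by
      funext u; rw [Matrix.inv_def, Ring.inverse_eq_inv']
    rw [heq]
    exact (hBc.matrix_det.inv₀ hBne).smul hBc.matrix_adjugate
  have hCc : Continuous fun u : X => Cm g (y u) T := by
    show Continuous fun u : X => T • (1 : Matrix (Fin n) (Fin n) ℝ)
      - Am g (y u) T * (Bm g (y u) T)⁻¹ * (Am g (y u) T)ᵀ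
    exact continuous_const.sub ((hAc.matrix_mul hBinv).matrix_mul hAc.matrix_transpose)
  have hCne : ∀ u, (Cm g (y u) T).det ≠ 0 :=
    fun u => ((Matrix.isUnit_iff_isUnit_det _).mp (hC u)).ne_zero
  have hCinv : Continuous fun u : X => (Cm g (y u) T)⁻¹ := by
    have heq : (fun u : X => (Cm g (y u) T)⁻¹)
        = fun u => ((Cm g (y u) T).det)⁻¹ • (Cm g (y u) T).adjugate := by
      funext u; rw [Matrix.inv_def, Ring.inverse_eq_inv']
    rw [heq]
    exact (hCc.matrix_det.inv₀ hCne).smul hCc.matrix_adjugate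
  have hxic : Continuous fun u : X => xiv g (y u) T := by
    show Continuous fun u : X => mv (Cm g (y u) T)⁻¹
      (∫ t in (0:ℝ)..T, mv (1 - Am g (y u) T * (Bm g (y u) T)⁻¹ * (Gm g (y u) t)ᵀ) (y u t))
    refine Continuous.mv_comp hCinv ?_
    refine intervalIntegral.continuous_parametric_intervalIntegral_of_continuous'
      (μ := volume) (f := fun (u : X) t => mv (1 - Am g (y u) T * (Bm g (y u) T)⁻¹ * (Gm g (y u) t)ᵀ) (y u t))
      ?_ 0 T
    exact Continuous.mv_comp (continuous_const.sub
      (((hAc.comp continuous_fst).matrix_mul (hBinv.comp continuous_fst)).matrix_mul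
        hGm.matrix_transpose)) hy
  have hthc : Continuous fun u : X => thv g (y u) T := by
    show Continuous fun u : X => mv (Bm g (y u) T)⁻¹
      (∫ t in (0:ℝ)..T, mv (Gm g (y u) t)ᵀ (y u t - xiv g (y u) T))
    refine Continuous.mv_comp hBinv ?_
    refine intervalIntegral.continuous_parametric_intervalIntegral_of_continuous'
      (μ := volume) (f := fun (u : X) t => mv (Gm g (y u) t)ᵀ (y u t - xiv g (y u) T)) ?_ 0 T
    exact Continuous.mv_comp hGm.matrix_transpose (hy.sub (hxic.comp continuous_fst))
  show Continuous fun u : X =>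
    ∫ t in (0:ℝ)..T, ‖y u t - xiv g (y u) T - mv (Gm g (y u) t) (thv g (y u) T)‖ ^ 2
  refine intervalIntegral.continuous_parametric_intervalIntegral_of_continuous'
    (f := fun (u : X) t => ‖y u t - xiv g (y u) T - mv (Gm g (y u) t) (thv g (y u) T)‖ ^ 2)
    ?_ 0 T
  exact (((hy.sub (hxic.comp continuous_fst)).sub
    (Continuous.mv_comp hGm (hthc.comp continuous_fst))).norm.pow 2)

end ODEC
end Aux4

/-- Identification: under uniqueness of solutions of the integral equation
and identifiability from the measured components, `M(u*) = 0`, `u*` is the unique minimizer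
of the limit criterion `M` on `U`, and the minimum is well separated:
for every `ε > 0`, `M(u*) < inf {M(u) : u ∈ U, ‖u − u*‖∞ ≥ ε}`. -/
theorem stmt10 {r q p : ℕ} (hr : 0 < r) (hq : 0 < q) (hp : 0 < p) {T : ℝ} (hT : 0 < T)
    (g : EuclideanSpace ℝ (Fin (r + q)) → Matrix (Fin (r + q)) (Fin p) ℝ)
    (hg : Continuous g)
    -- (b) uniqueness of solutions of the integral equation
    (huniq : ∀ (θ' : EuclideanSpace ℝ (Fin p)) (ξ' : EuclideanSpace ℝ (Fin (r + q)))
      (x₁ x₂ : ℝ → EuclideanSpace ℝ (Fin (r + q))),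
      IsSol g T θ' ξ' x₁ → IsSol g T θ' ξ' x₂ → ∀ t ∈ Set.Icc (0:ℝ) T, x₁ t = x₂ t)
    -- the true solution
    (θ : EuclideanSpace ℝ (Fin p)) (ξ : EuclideanSpace ℝ (Fin (r + q)))
    (x : ℝ → EuclideanSpace ℝ (Fin (r + q))) (hsol : IsSol g T θ ξ x)
    -- (c) identifiability from the measured part
    (hident : ∀ (θ' : EuclideanSpace ℝ (Fin p)) (ξ' : EuclideanSpace ℝ (Fin (r + q)))
      (θ'' : EuclideanSpace ℝ (Fin p)) (ξ'' : EuclideanSpace ℝ (Fin (r + q)))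
      (x₁ x₂ : ℝ → EuclideanSpace ℝ (Fin (r + q))),
      IsSol g T θ' ξ' x₁ → IsSol g T θ'' ξ'' x₂ →
      (∀ t ∈ Set.Icc (0:ℝ) T, measPart x₁ t = measPart x₂ t) → (θ', ξ') = (θ'', ξ''))
    -- (d) the compact set `U` containing `u*`, and invertibility on `U`
    (U : Set C(Set.Icc (0:ℝ) T, EuclideanSpace ℝ (Fin q))) (hU : IsCompact U)
    (ustar : C(Set.Icc (0:ℝ) T, EuclideanSpace ℝ (Fin q))) (hmem : ustar ∈ U)
    (hustar : ∀ t : Set.Icc (0:ℝ) T, ustar t = unmeasPart x ↑t)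
    (hinv : ∀ u ∈ U, IsUnit (Bm g (pair (measPart x) (ext hT.le u)) T) ∧
      IsUnit (Cm g (pair (measPart x) (ext hT.le u)) T)) :
    Mf g (pair (measPart x) (ext hT.le ustar)) T = 0 ∧
    (∀ u ∈ U, u ≠ ustar →
      Mf g (pair (measPart x) (ext hT.le ustar)) T <
        Mf g (pair (measPart x) (ext hT.le u)) T) ∧
    (∀ ε > (0:ℝ), ∃ c : ℝ,
      Mf g (pair (measPart x) (ext hT.le ustar)) T < c ∧
      ∀ u ∈ U, ε ≤ dist u ustar → c ≤ Mf g (pair (measPart x) (ext hT.le u)) T) := by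
  classical
  have hxC : ContinuousOn x (Set.Icc 0 T) := hsol.1
  have hmeasCO : ContinuousOn (measPart x) (Set.Icc 0 T) := by
    have hψ : Continuous fun v : EuclideanSpace ℝ (Fin (r + q)) =>
        (EuclideanSpace.equiv (Fin r) ℝ).symm (fun i => v (Fin.castAdd q i)) := by
      apply Continuous.comp (EuclideanSpace.equiv (Fin r) ℝ).symm.continuous
      exact continuous_pi fun i =>
        (continuous_apply (Fin.castAdd q i)).comp (PiLp.continuous_ofLp _ _)
    exact hψ.comp_continuousOn hxC
  set mC : C(Set.Icc (0:ℝ) T, EuclideanSpace ℝ (Fin r)) :=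
    ⟨(Set.Icc (0:ℝ) T).restrict (measPart x), hmeasCO.restrict⟩ with hmC
  set mhat : ℝ → EuclideanSpace ℝ (Fin r) := ext hT.le mC with hmhat
  have hmhat_cont : Continuous mhat := mC.continuous.comp continuous_projIcc
  have hmhat_eq : ∀ t ∈ Set.Icc (0:ℝ) T, mhat t = measPart x t := by
    intro t ht
    show mC (Set.projIcc 0 T hT.le t) = measPart x t
    rw [Set.projIcc_of_mem hT.le ht]
    rfl
  set Y : C(Set.Icc (0:ℝ) T, EuclideanSpace ℝ (Fin q)) → ℝ → EuclideanSpace ℝ (Fin (r + q)) :=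
    fun u => pair mhat (ext hT.le u) with hYdef
  have hext_eq : ∀ (u : C(Set.Icc (0:ℝ) T, EuclideanSpace ℝ (Fin q))) (t : ℝ)
      (ht : t ∈ Set.Icc (0:ℝ) T), ext hT.le u t = u ⟨t, ht⟩ := by
    intro u t ht
    show u (Set.projIcc 0 T hT.le t) = u ⟨t, ht⟩
    rw [Set.projIcc_of_mem hT.le ht]
  have hY_eqOn : ∀ u, Set.EqOn (pair (measPart x) (ext hT.le u)) (Y u) (Set.Icc 0 T) := by
    intro u t ht
    show (EuclideanSpace.equiv (Fin (r + q)) ℝ).symm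
        (Fin.append (EuclideanSpace.equiv (Fin r) ℝ (measPart x t))
          (EuclideanSpace.equiv (Fin q) ℝ (ext hT.le u t))) = _
    rw [← hmhat_eq t ht]
    rfl
  have hMf_eq : ∀ u, Mf g (pair (measPart x) (ext hT.le u)) T = Mf g (Y u) T :=
    fun u => Mf_congr hT.le (hY_eqOn u)
  have hBY : ∀ u ∈ U, IsUnit (Bm g (Y u) T) := fun u hu =>
    Bm_congr hT.le (hY_eqOn u) ▸ (hinv u hu).1
  have hCY : ∀ u ∈ U, IsUnit (Cm g (Y u) T) := fun u hu =>
    Cm_congr hT.le (hY_eqOn u) ▸ (hinv u hu).2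
  have hYcont : ∀ u, Continuous (Y u) := fun u =>
    continuous_pair hmhat_cont ((map_continuous u).comp continuous_projIcc)
  have hYstar : Set.EqOn (Y ustar) x (Set.Icc 0 T) := by
    intro t ht
    show (EuclideanSpace.equiv (Fin (r + q)) ℝ).symm
        (Fin.append (EuclideanSpace.equiv (Fin r) ℝ (mhat t))
          (EuclideanSpace.equiv (Fin q) ℝ (ext hT.le ustar t))) = x t
    rw [hmhat_eq t ht, hext_eq ustar t ht, hustar ⟨t, ht⟩]
    exact congrFun (pair_measPart_unmeasPart x) t
  have hsolY : ∀ t ∈ Set.Icc (0:ℝ) T, Y ustar t = ξ + mv (Gm g (Y ustar) t) θ := by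
    intro t ht
    rw [hYstar ht, hsol.2 t ht, Gm_congr hYstar t ht]
  obtain ⟨hxis, hths, hM0⟩ :=
    true_sol_eval hg hT (hYcont ustar) hsolY (hBY ustar hmem) (hCY ustar hmem)
  have part1 : Mf g (pair (measPart x) (ext hT.le ustar)) T = 0 := by
    rw [hMf_eq ustar, hM0]
  have part2 : ∀ u ∈ U, u ≠ ustar → 0 < Mf g (Y u) T := by
    intro u hu hne
    rcases lt_or_eq_of_le (Mf_nonneg hT.le (Y u)) with hlt | heq0
    · exact hlt
    exfalso
    have h0 : Mf g (Y u) T = 0 := heq0.symm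
    have hs := isSol_of_Mf_eq_zero hg hT (hYcont u) h0
    have hsolu : IsSol g T (thv g (Y u) T) (xiv g (Y u) T) (Y u) := ⟨(hYcont u).continuousOn, hs⟩
    have hmeq : ∀ t ∈ Set.Icc (0:ℝ) T, measPart (Y u) t = measPart x t := by
      intro t ht
      have h2 : measPart (Y u) = mhat := measPart_pair _ _
      rw [h2, hmhat_eq t ht]
    have hid := hident _ _ θ ξ (Y u) x hsolu hsol hmeq
    have hθu : thv g (Y u) T = θ := congrArg Prod.fst hid
    have hξu : xiv g (Y u) T = ξ := congrArg Prod.snd hid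
    rw [hθu, hξu] at hsolu
    have heqx := huniq θ ξ (Y u) x hsolu hsol
    apply hne
    apply ContinuousMap.ext
    rintro ⟨t, ht⟩
    have h3 : unmeasPart (Y u) t = unmeasPart x t := by
      show (EuclideanSpace.equiv (Fin q) ℝ).symm (fun i => Y u t (Fin.natAdd r i)) = _
      rw [heqx t ht]
      rfl
    calc u ⟨t, ht⟩ = ext hT.le u t := (hext_eq u t ht).symm
      _ = unmeasPart (Y u) t := (congrFun (unmeasPart_pair mhat (ext hT.le u)) t).symm
      _ = unmeasPart x t := h3
      _ = ustar ⟨t, ht⟩ := (hustar ⟨t, ht⟩).symm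
  have hMcont : ContinuousOn (fun u => Mf g (Y u) T) U := by
    rw [continuousOn_iff_continuous_restrict]
    have hYj : Continuous fun z : (↥U) × ℝ => Y (z.1 : C(Set.Icc (0:ℝ) T, EuclideanSpace ℝ (Fin q))) z.2 := by
      apply continuous_pair (hmhat_cont.comp continuous_snd)
      exact continuous_eval.comp
        ((continuous_subtype_val.comp continuous_fst).prodMk
          ((continuous_projIcc : Continuous (Set.projIcc (0:ℝ) T hT.le)).comp continuous_snd))
    exact continuous_Mf_param hg hT (X := ↥U) (y := fun u : ↥U => Y ↑u) hYj
      (fun u => hBY u u.2) (fun u => hCY u u.2)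
  refine ⟨part1, ?_, ?_⟩
  · intro u hu hne
    rw [part1, hMf_eq u]
    exact part2 u hu hne
  · intro ε hε
    by_cases hK : ∃ u ∈ U, ε ≤ dist u ustar
    · set K : Set C(Set.Icc (0:ℝ) T, EuclideanSpace ℝ (Fin q)) :=
        U ∩ {u | ε ≤ dist u ustar} with hKdef
      have hKcl : IsClosed {u : C(Set.Icc (0:ℝ) T, EuclideanSpace ℝ (Fin q)) | ε ≤ dist u ustar} :=
        isClosed_le continuous_const (continuous_id.dist continuous_const)
      have hKc : IsCompact K := hU.inter_right hKcl
      have hKne : K.Nonempty := by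
        obtain ⟨u, hu, hd⟩ := hK
        exact ⟨u, hu, hd⟩
      obtain ⟨u₀, hu₀K, hmin⟩ := hKc.exists_isMinOn hKne (hMcont.mono fun z hz => hz.1)
      refine ⟨Mf g (Y u₀) T, ?_, ?_⟩
      · rw [part1]
        apply part2 u₀ hu₀K.1
        intro hcon
        have hd := hu₀K.2
        rw [hcon] at hd
        simp only [Set.mem_setOf_eq, dist_self] at hd
        linarith
      · intro u hu hd
        rw [hMf_eq u]
        exact isMinOn_iff.mp hmin u ⟨hu, hd⟩
    · push_neg at hK
      refine ⟨1, by rw [part1]; norm_num, fun u hu hd => absurd hd (not_le.mpr (hK u hu))⟩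
end
end

section
/- Let u : [0,T] → ℝ^{d−r} be continuous and suppose B_u and T·I_d − A_u B_u⁻¹ A_uᵀ are invertible, so that ξ_u, θ_u and M(u) are defined. If M(u) = 0, then x_u(t) = ξ_u + G_u(t)·θ_u for every t ∈ [0,T]; in particular x_u is continuously differentiable, x_u(0) = ξ_u, and x_u'(t) = g(x_u(t))·θ_u for all t ∈ [0,T]. -/
open MeasureTheory Filter
open scoped Matrix

attribute [local instance] Matrix.frobeniusSeminormedAddCommGroup
  Matrix.frobeniusNormedAddCommGroup Matrix.frobeniusNormedSpace

noncomputable section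

open ODEC

section Aux
open ODEC

/-- `mv · θ` as a continuous linear map in the matrix argument. -/
def lmv {n p : ℕ} (θ : EuclideanSpace ℝ (Fin p)) :
    Matrix (Fin n) (Fin p) ℝ →L[ℝ] EuclideanSpace ℝ (Fin n) :=
  LinearMap.toContinuousLinearMap
    { toFun := fun A => mv A θ
      map_add' := fun A B => by simp [mv, map_add]
      map_smul' := fun c A => by simp [mv, _root_.map_smul] }

lemma lmv_apply {n p : ℕ} (θ : EuclideanSpace ℝ (Fin p)) (A : Matrix (Fin n) (Fin p) ℝ) :
    lmv θ A = mv A θ := rfl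

end Aux


/-- If `M(u) = 0` then `x_u(t) = ξ_u + G_u(t)θ_u` on `[0,T]`; in particular
`x_u(0) = ξ_u`, `x_u` is differentiable on `[0,T]` with `x_u'(t) = g(x_u(t))θ_u`, and this
derivative is continuous on `[0,T]`. -/
theorem stmt11 {r q p : ℕ} (hr : 0 < r) (hq : 0 < q) (hp : 0 < p) {T : ℝ} (hT : 0 < T)
    (g : EuclideanSpace ℝ (Fin (r + q)) → Matrix (Fin (r + q)) (Fin p) ℝ)
    (hg : Continuous g)
    (m : ℝ → EuclideanSpace ℝ (Fin r)) (hm : ContinuousOn m (Set.Icc 0 T))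
    (u : ℝ → EuclideanSpace ℝ (Fin q)) (hu : ContinuousOn u (Set.Icc 0 T))
    (hBinv : IsUnit (Bm g (pair m u) T)) (hCinv : IsUnit (Cm g (pair m u) T))
    (hM0 : Mf g (pair m u) T = 0) :
    (∀ t ∈ Set.Icc (0:ℝ) T,
      pair m u t = xiv g (pair m u) T + mv (Gm g (pair m u) t) (thv g (pair m u) T)) ∧
    pair m u 0 = xiv g (pair m u) T ∧
    (∀ t ∈ Set.Icc (0:ℝ) T,
      HasDerivWithinAt (pair m u) (mv (g (pair m u t)) (thv g (pair m u) T))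
        (Set.Icc 0 T) t) ∧
    ContinuousOn (fun t => mv (g (pair m u t)) (thv g (pair m u) T)) (Set.Icc 0 T) := by
  have hT0 : (0:ℝ) ≤ T := hT.le
  set x := pair m u with hxdef
  set θ := thv g x T with hθdef
  set ξ := xiv g x T with hξdef
  simp only [Mf] at hM0
  rw [← hξdef, ← hθdef] at hM0
  -- continuity of x on [0,T]
  have hx : ContinuousOn x (Set.Icc 0 T) := by
    have happ : ContinuousOn (fun t => (Fin.append
        ((EuclideanSpace.equiv (Fin r) ℝ) (m t))
        ((EuclideanSpace.equiv (Fin q) ℝ) (u t)) : Fin (r+q) → ℝ)) (Set.Icc 0 T) := by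
      apply continuousOn_pi.mpr
      intro i
      refine Fin.addCases (fun j => ?_) (fun j => ?_) i
      · simp only [Fin.append_left]
        exact (EuclideanSpace.proj j).continuous.comp_continuousOn hm
      · simp only [Fin.append_right]
        exact (EuclideanSpace.proj j).continuous.comp_continuousOn hu
    exact (EuclideanSpace.equiv (Fin (r+q)) ℝ).symm.continuous.comp_continuousOn happ
  -- clamp to [0,T]
  set c : ℝ → ℝ := fun s => max 0 (min s T) with hcdef
  have hc : Continuous c := continuous_const.max (continuous_id.min continuous_const)
  have hcmem : ∀ s, c s ∈ Set.Icc (0:ℝ) T := fun s =>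
    ⟨le_max_left _ _, max_le hT0 (min_le_right _ _)⟩
  have hceq : ∀ s ∈ Set.Icc (0:ℝ) T, c s = s := by
    intro s hs
    simp only [hcdef]
    rw [min_eq_left hs.2, max_eq_right hs.1]
  have hy : Continuous (fun s => x (c s)) := hx.comp_continuous hc hcmem
  have hgy : Continuous (fun s => g (x (c s))) := hg.comp hy
  -- Gm agrees with the primitive of the clamped integrand on [0,T]
  have hGm : ∀ t ∈ Set.Icc (0:ℝ) T, Gm g x t = ∫ s in (0:ℝ)..t, g (x (c s)) := by
    intro t ht
    refine intervalIntegral.integral_congr fun s hs => ?_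
    rw [Set.uIcc_of_le ht.1] at hs
    rw [hceq s ⟨hs.1, hs.2.trans ht.2⟩]
  have hprim : ∀ b : ℝ, HasDerivAt (fun t => ∫ s in (0:ℝ)..t, g (x (c s)))
      (g (x (c b))) b := fun b => (hgy.integral_hasStrictDerivAt 0 b).hasDerivAt
  have hprimCont : Continuous (fun t => ∫ s in (0:ℝ)..t, g (x (c s))) :=
    continuous_iff_continuousAt.mpr fun b => (hprim b).continuousAt
  have hGmCont : ContinuousOn (fun t => Gm g x t) (Set.Icc 0 T) :=
    hprimCont.continuousOn.congr hGm
  -- the residual function is continuous on [0,T]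
  have hfCont : ContinuousOn (fun t => x t - ξ - mv (Gm g x t) θ) (Set.Icc 0 T) := by
    refine (hx.sub continuousOn_const).sub ?_
    exact (lmv θ).continuous.comp_continuousOn hGmCont
  -- the residual vanishes on [0,T]
  have hsq : IntegrableOn (fun t => ‖x t - ξ - mv (Gm g x t) θ‖^2) (Set.Icc 0 T) :=
    (hfCont.norm.pow 2).integrableOn_Icc
  have h0 : ∫ t in Set.Ioc (0:ℝ) T, ‖x t - ξ - mv (Gm g x t) θ‖^2 = 0 := by
    rw [← intervalIntegral.integral_of_le hT0]; exact hM0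
  have hae : (fun t => ‖x t - ξ - mv (Gm g x t) θ‖^2)
      =ᵐ[volume.restrict (Set.Ioc 0 T)] 0 :=
    (integral_eq_zero_iff_of_nonneg (fun t => sq_nonneg _)
      (hsq.mono_set Set.Ioc_subset_Icc_self)).1 h0
  have hae' : (fun t => x t - ξ - mv (Gm g x t) θ)
      =ᵐ[volume.restrict (Set.Icc 0 T)] 0 := by
    rw [← MeasureTheory.restrict_Ioc_eq_restrict_Icc]
    filter_upwards [hae] with t ht
    simp only [Pi.zero_apply] at ht ⊢
    have hn : ‖x t - ξ - mv (Gm g x t) θ‖ = 0 := by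
      have := sq_nonneg ‖x t - ξ - mv (Gm g x t) θ‖
      nlinarith [norm_nonneg (x t - ξ - mv (Gm g x t) θ)]
    exact norm_eq_zero.mp hn
  have heq : Set.EqOn (fun t => x t - ξ - mv (Gm g x t) θ) 0 (Set.Icc 0 T) :=
    MeasureTheory.Measure.eqOn_Icc_of_ae_eq (μ := (volume : Measure ℝ)) hT.ne hae' hfCont continuousOn_const
  -- main pointwise identity
  have hmain : ∀ t ∈ Set.Icc (0:ℝ) T, x t = ξ + mv (Gm g x t) θ := by
    intro t ht
    have h := heq ht
    simp only [Pi.zero_apply] at h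
    rwa [sub_sub, sub_eq_zero] at h
  -- initial value
  have hx0 : x 0 = ξ := by
    have h := hmain 0 (Set.left_mem_Icc.mpr hT0)
    have hG0 : Gm g x 0 = 0 := by simp [Gm]
    rw [h, hG0]
    simp [mv]
  -- exchanging mv and the integral
  have hswap : ∀ t ∈ Set.Icc (0:ℝ) T,
      mv (Gm g x t) θ = ∫ s in (0:ℝ)..t, mv (g (x (c s))) θ := by
    intro t ht
    rw [hGm t ht, ← lmv_apply]
    exact (ContinuousLinearMap.intervalIntegral_comp_comm (lmv θ)
      (hgy.intervalIntegrable (μ := volume) 0 t)).symm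
  -- derivative
  have hderiv : ∀ t ∈ Set.Icc (0:ℝ) T,
      HasDerivWithinAt x (mv (g (x t)) θ) (Set.Icc 0 T) t := by
    intro t ht
    have hF0 : HasDerivAt (fun b => ∫ s in (0:ℝ)..b, mv (g (x (c s))) θ)
        (mv (g (x (c t))) θ) t := by
      have h1 : Continuous (fun s => mv (g (x (c s))) θ) :=
        (lmv θ).continuous.comp hgy
      exact (h1.integral_hasStrictDerivAt 0 t).hasDerivAt
    have hF : HasDerivAt (fun b => ξ + ∫ s in (0:ℝ)..b, mv (g (x (c s))) θ)
        (mv (g (x (c t))) θ) t := hF0.const_add ξ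
    have hcongr : HasDerivWithinAt x (mv (g (x (c t))) θ) (Set.Icc 0 T) t := by
      refine (hF.hasDerivWithinAt).congr (fun s hs => ?_) ?_
      · rw [hmain s hs, hswap s hs]
      · rw [hmain t ht, hswap t ht]
    rwa [hceq t ht] at hcongr
  have hdc : ContinuousOn (fun t => mv (g (x t)) θ) (Set.Icc 0 T) :=
    ((lmv θ).continuous.comp hg).comp_continuousOn hx
  exact ⟨hmain, hx0, hderiv, hdc⟩
end
end
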